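/- arXiv:math/0503602 — 6 statements merged into one kernel-verified Lean document; each statement's English description precedes it below -/
import Mathlib

section
/- The K-transform characterizes a probability measure on the unit circle completely: if μ and ν are probability measures on S¹ with K_μ(z) = K_ν(z) for all z in the open unit disc 𝔻, then μ = ν. -/
open MeasureTheory Metric

noncomputable instance : MeasurableSpace Circle := borel Circle
instance : BorelSpace Circle := ⟨rfl⟩

/-- `ψ_μ(z) = ∫_{S¹} zx/(1-zx) dμ(x)` for a measure `μ` on the unit circle. -/
noncomputable def psiM (μ : Measure Circle) (z : ℂ) : ℂ :=
  ∫ x : Circle, (z * x) / (1 - z * x) ∂μ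

/-- The K-transform `K_μ(z) = ψ_μ(z)/(1 + ψ_μ(z))` of a measure on the unit circle. -/
noncomputable def Km (μ : Measure Circle) (z : ℂ) : ℂ :=
  psiM μ z / (1 + psiM μ z)

open Complex
open scoped ComplexConjugate ENNReal NNReal

namespace KHelp

lemma cont_coe : Continuous ((↑) : Circle → ℂ) := continuous_subtype_val

lemma integrable_cont (μ : Measure Circle) [IsFiniteMeasure μ] {f : Circle → ℂ}
    (hf : Continuous f) : Integrable f μ :=
  hf.integrable_of_hasCompactSupport (HasCompactSupport.of_compactSpace _)

lemma norm_zx {z : ℂ} (hz : ‖z‖ < 1) (x : Circle) : ‖z * (x : ℂ)‖ < 1 := by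
  rw [norm_mul]; simpa [Circle.norm_coe] using hz

lemma one_sub_ne {z : ℂ} (hz : ‖z‖ < 1) (x : Circle) : (1 : ℂ) - z * x ≠ 0 := by
  intro h
  have h2 : (1 : ℂ) = z * x := by linear_combination h
  have := norm_zx hz x
  rw [← h2] at this; simp at this

noncomputable def F (μ : Measure Circle) (z : ℂ) : ℂ :=
  ∫ x : Circle, (1 - z * x)⁻¹ ∂μ

lemma cont_integrand {z : ℂ} (hz : ‖z‖ < 1) :
    Continuous fun x : Circle => ((1 : ℂ) - z * x)⁻¹ :=
  (continuous_const.sub (continuous_const.mul cont_coe)).inv₀ fun x => one_sub_ne hz x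

lemma cont_integrand' {z : ℂ} (hz : ‖z‖ < 1) :
    Continuous fun x : Circle => z * (x : ℂ) / (1 - z * x) :=
  (continuous_const.mul cont_coe).div
    (continuous_const.sub (continuous_const.mul cont_coe)) fun x => one_sub_ne hz x

lemma F_eq_one_add_psi (μ : Measure Circle) [IsProbabilityMeasure μ] {z : ℂ} (hz : ‖z‖ < 1) :
    F μ z = 1 + psiM μ z := by
  have h1 : Integrable (fun x : Circle => ((1 : ℂ) - z * x)⁻¹) μ :=
    integrable_cont μ (cont_integrand hz)
  have h2 : Integrable (fun x : Circle => z * (x : ℂ) / (1 - z * x)) μ :=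
    integrable_cont μ (cont_integrand' hz)
  have key : F μ z - psiM μ z = 1 := by
    rw [F, psiM, ← integral_sub h1 h2]
    have : ∀ x : Circle, ((1 : ℂ) - z * x)⁻¹ - z * x / (1 - z * x) = 1 := by
      intro x
      rw [inv_eq_one_div, div_sub_div_same, div_self (one_sub_ne hz x)]
    simp_rw [this]
    simp
  linear_combination key

lemma re_pos (μ : Measure Circle) [IsProbabilityMeasure μ] {z : ℂ} (hz : ‖z‖ < 1) :
    0 < (F μ z).re := by
  have h1 : Integrable (fun x : Circle => ((1 : ℂ) - z * x)⁻¹) μ :=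
    integrable_cont μ (cont_integrand hz)
  have hre : (F μ z).re = ∫ x : Circle, (((1 : ℂ) - z * x)⁻¹).re ∂μ :=
    (integral_re h1).symm
  have hbound : ∀ x : Circle, (1 - ‖z‖) / 4 ≤ (((1 : ℂ) - z * x)⁻¹).re := by
    intro x
    rw [Complex.inv_re]
    have hn : Complex.normSq (1 - z * x) ≤ 4 := by
      have : ‖(1 : ℂ) - z * x‖ ≤ 2 := by
        calc ‖(1 : ℂ) - z * x‖ ≤ ‖(1 : ℂ)‖ + ‖z * (x : ℂ)‖ := norm_sub_le _ _
        _ ≤ 1 + 1 := by simpa using (norm_zx hz x).le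
        _ = 2 := by norm_num
      rw [Complex.normSq_eq_norm_sq]
      calc ‖(1 : ℂ) - z * x‖ ^ 2 ≤ 2 ^ 2 :=
            pow_le_pow_left₀ (norm_nonneg _) this 2
        _ = 4 := by norm_num
    have hrepos : 1 - ‖z‖ ≤ ((1 : ℂ) - z * x).re := by
      have : (z * (x : ℂ)).re ≤ ‖z * (x : ℂ)‖ := Complex.re_le_norm _
      have h2 : ‖z * (x : ℂ)‖ = ‖z‖ := by rw [norm_mul]; simp [Circle.norm_coe]
      simp only [Complex.sub_re, Complex.one_re]
      linarith [this, h2.le]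
    have hnpos : 0 < Complex.normSq (1 - z * x) := by
      rw [Complex.normSq_pos]; exact one_sub_ne hz x
    have hz1 : 0 < 1 - ‖z‖ := by linarith
    exact div_le_div₀ (by linarith) hrepos hnpos hn
  have hint : Integrable (fun x : Circle => (((1 : ℂ) - z * x)⁻¹).re) μ := h1.re
  have := integral_mono (integrable_const ((1 - ‖z‖) / 4)) hint fun x => hbound x
  rw [integral_const] at this
  simp only [Measure.real, measure_univ, ENNReal.toReal_one, one_smul] at this
  rw [hre]
  have hz1 : 0 < 1 - ‖z‖ := by linarith
  linarith

lemma F_ne_zero (μ : Measure Circle) [IsProbabilityMeasure μ] {z : ℂ} (hz : ‖z‖ < 1) :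
    F μ z ≠ 0 := fun h => by simpa [h] using re_pos μ hz

lemma F_eq_of_Km_eq (μ ν : Measure Circle) [IsProbabilityMeasure μ] [IsProbabilityMeasure ν]
    (h : ∀ z ∈ ball (0 : ℂ) 1, Km μ z = Km ν z) :
    ∀ z, ‖z‖ < 1 → F μ z = F ν z := by
  intro z hz
  have hK := h z (by simpa [mem_ball, dist_zero_right] using hz)
  have e1 : psiM μ z = F μ z - 1 := by rw [F_eq_one_add_psi μ hz]; ring
  have e2 : psiM ν z = F ν z - 1 := by rw [F_eq_one_add_psi ν hz]; ring
  rw [Km, Km, e1, e2] at hK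
  have e3 : (1 : ℂ) + (F μ z - 1) = F μ z := by ring
  have e4 : (1 : ℂ) + (F ν z - 1) = F ν z := by ring
  rw [e3, e4, div_eq_div_iff (F_ne_zero μ hz) (F_ne_zero ν hz)] at hK
  linear_combination hK

noncomputable def mom (μ : Measure Circle) (n : ℕ) : ℂ := ∫ x : Circle, (x : ℂ) ^ n ∂μ

lemma norm_mom_le (μ : Measure Circle) [IsProbabilityMeasure μ] (n : ℕ) : ‖mom μ n‖ ≤ 1 := by
  have h := norm_integral_le_of_norm_le_const (μ := μ)
      (f := fun x : Circle => (x : ℂ) ^ n) (C := 1) ?_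
  · simpa [measure_univ, mom] using h
  · filter_upwards with x
    rw [norm_pow]
    simp [Circle.norm_coe]

lemma hasF (μ : Measure Circle) [IsProbabilityMeasure μ] :
    HasFPowerSeriesOnBall (F μ) (FormalMultilinearSeries.ofScalars ℂ (mom μ)) 0 1 := by
  constructor
  · have := FormalMultilinearSeries.le_radius_of_bound
      (FormalMultilinearSeries.ofScalars ℂ (mom μ)) 1 (r := 1) ?_
    · simpa using this
    · intro n
      rw [FormalMultilinearSeries.ofScalars_norm]
      simpa using norm_mom_le μ n
  · exact one_pos
  · intro y hy
    have hy' : ‖y‖ < 1 := by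
      have := mem_emetric_ball_zero_iff.mp hy
      simpa [enorm_eq_nnnorm, ← NNReal.coe_lt_coe, ENNReal.coe_lt_one_iff] using this
    simp only [FormalMultilinearSeries.ofScalars_apply_eq, smul_eq_mul, zero_add]
    have hsummable : Summable fun n : ℕ => mom μ n * y ^ n := by
      apply Summable.of_norm_bounded (summable_geometric_of_lt_one (norm_nonneg y) hy')
      intro n
      rw [norm_mul, norm_pow]
      exact mul_le_of_le_one_left (pow_nonneg (norm_nonneg y) n) (norm_mom_le μ n)
    rw [Summable.hasSum_iff hsummable]
    have h1 : ∀ n : ℕ, mom μ n * y ^ n = ∫ x : Circle, (y * (x : ℂ)) ^ n ∂μ := by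
      intro n
      rw [mom, mul_comm, ← integral_const_mul]
      congr 1; ext x; rw [mul_pow]
    simp_rw [h1]
    rw [← integral_tsum]
    · apply integral_congr_ae
      filter_upwards with x
      exact tsum_geometric_of_norm_lt_one (norm_zx hy' x)
    · intro n
      have hc : Continuous fun x : Circle => (y * (x : ℂ)) ^ n :=
        (continuous_const.mul cont_coe).pow n
      exact hc.aestronglyMeasurable
    · have hnn : ∀ (n : ℕ) (x : Circle), ‖(y * (x : ℂ)) ^ n‖₊ = ‖y‖₊ ^ n := by
        intro n x
        rw [nnnorm_pow, nnnorm_mul]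
        congr 1
        have : ‖(x : ℂ)‖₊ = 1 := by
          ext; simp [nnnorm, Circle.norm_coe]
        rw [this, mul_one]
      have : ∀ n : ℕ, ∫⁻ x : Circle, ‖(y * (x : ℂ)) ^ n‖₊ ∂μ = (‖y‖₊ : ℝ≥0∞) ^ n := by
        intro n
        simp_rw [hnn]
        rw [lintegral_const, measure_univ, mul_one, ENNReal.coe_pow]
      calc ∑' n : ℕ, ∫⁻ x : Circle, ‖(y * (x : ℂ)) ^ n‖₊ ∂μ
            = ∑' n : ℕ, (‖y‖₊ : ℝ≥0∞) ^ n := tsum_congr this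
        _ = (1 - (‖y‖₊ : ℝ≥0∞))⁻¹ := ENNReal.tsum_geometric _
        _ ≠ ⊤ := by
            rw [Ne, ENNReal.inv_eq_top, tsub_eq_zero_iff_le, not_le]
            exact mem_emetric_ball_zero_iff.mp hy

lemma mom_eq_of_F_eq (μ ν : Measure Circle) [IsProbabilityMeasure μ] [IsProbabilityMeasure ν]
    (h : ∀ z, ‖z‖ < 1 → F μ z = F ν z) : mom μ = mom ν := by
  have hμ := (hasF μ).hasFPowerSeriesAt
  have hν := (hasF ν).hasFPowerSeriesAt
  have hev : F ν =ᶠ[nhds 0] F μ := by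
    filter_upwards [Metric.ball_mem_nhds (0 : ℂ) one_pos] with z hz
    exact (h z (by simpa [mem_ball, dist_zero_right] using hz)).symm
  have := (hν.congr hev).eq_formalMultilinearSeries hμ
  exact ((FormalMultilinearSeries.ofScalars_series_eq_iff ℂ (mom ν) (mom μ)).mp this).symm

noncomputable def chi (n : ℤ) : C(Circle, ℂ) :=
  ⟨fun x => ((x ^ n : Circle) : ℂ), cont_coe.comp (continuous_zpow n)⟩

@[simp] lemma chi_apply (n : ℤ) (x : Circle) : chi n x = ((x ^ n : Circle) : ℂ) := rfl

lemma chi_mul (m n : ℤ) : chi m * chi n = chi (m + n) := by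
  ext x
  simp only [ContinuousMap.mul_apply, chi_apply, ← Circle.coe_mul, ← zpow_add]

lemma star_chi (n : ℤ) : star (chi n) = chi (-n) := by
  ext x
  simp only [ContinuousMap.star_apply, chi_apply, zpow_neg]
  rw [Circle.coe_inv_eq_conj]
  rfl

lemma chi_zero : chi 0 = 1 := by
  ext x
  simp

lemma chi_cont (n : ℤ) : Continuous fun x : Circle => ((x ^ n : Circle) : ℂ) :=
  (chi n).continuous

lemma integral_chi_eq (μ ν : Measure Circle) [IsProbabilityMeasure μ] [IsProbabilityMeasure ν]
    (hmom : mom μ = mom ν) (n : ℤ) :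
    ∫ x : Circle, chi n x ∂μ = ∫ x : Circle, chi n x ∂ν := by
  match n with
  | (m : ℕ) =>
    have key : ∀ x : Circle, chi (m : ℤ) x = (x : ℂ) ^ m := by
      intro x
      rw [chi_apply, zpow_natCast]
      exact map_pow Circle.coeHom x m
    simp_rw [key]
    exact congrFun hmom m
  | Int.negSucc m =>
    have key : ∀ x : Circle, chi (Int.negSucc m) x = (starRingEnd ℂ) ((x : ℂ) ^ (m + 1)) := by
      intro x
      rw [chi_apply, zpow_negSucc, Circle.coe_inv_eq_conj]
      exact congrArg _ (map_pow Circle.coeHom x (m + 1))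
    simp_rw [key]
    rw [integral_conj, integral_conj]
    have := congrFun hmom (m + 1)
    rw [mom, mom] at this
    rw [this]

noncomputable def chiSpan : Submodule ℂ C(Circle, ℂ) := Submodule.span ℂ (Set.range chi)

lemma chi_mem (n : ℤ) : chi n ∈ chiSpan := Submodule.subset_span ⟨n, rfl⟩

lemma chiSpan_mul_chi {f : C(Circle, ℂ)} (hf : f ∈ chiSpan) (n : ℤ) : f * chi n ∈ chiSpan := by
  induction hf using Submodule.span_induction with
  | mem g hg => obtain ⟨m, rfl⟩ := hg; rw [chi_mul]; exact chi_mem _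
  | zero => rw [zero_mul]; exact chiSpan.zero_mem
  | add g₁ g₂ _ _ h₁ h₂ => rw [add_mul]; exact chiSpan.add_mem h₁ h₂
  | smul a g _ hg => rw [smul_mul_assoc]; exact chiSpan.smul_mem a hg

lemma chiSpan_mul {f g : C(Circle, ℂ)} (hf : f ∈ chiSpan) (hg : g ∈ chiSpan) :
    f * g ∈ chiSpan := by
  induction hg using Submodule.span_induction with
  | mem g hgm => obtain ⟨m, rfl⟩ := hgm; exact chiSpan_mul_chi hf m
  | zero => rw [mul_zero]; exact chiSpan.zero_mem
  | add g₁ g₂ _ _ h₁ h₂ => rw [mul_add]; exact chiSpan.add_mem h₁ h₂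
  | smul a g _ hgg => rw [mul_smul_comm]; exact chiSpan.smul_mem a hgg

lemma chiSpan_star {f : C(Circle, ℂ)} (hf : f ∈ chiSpan) : star f ∈ chiSpan := by
  induction hf using Submodule.span_induction with
  | mem g hgm => obtain ⟨m, rfl⟩ := hgm; rw [star_chi]; exact chi_mem _
  | zero => rw [star_zero]; exact chiSpan.zero_mem
  | add g₁ g₂ _ _ h₁ h₂ => rw [star_add]; exact chiSpan.add_mem h₁ h₂
  | smul a g _ hgg =>
      rw [star_smul]
      exact chiSpan.smul_mem _ hgg

noncomputable def chiAlg : StarSubalgebra ℂ C(Circle, ℂ) where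
  carrier := chiSpan
  mul_mem' := fun hf hg => chiSpan_mul hf hg
  add_mem' := fun hf hg => chiSpan.add_mem hf hg
  one_mem' := chi_zero ▸ chi_mem 0
  zero_mem' := chiSpan.zero_mem
  algebraMap_mem' := fun r => by
    have : algebraMap ℂ C(Circle, ℂ) r = r • (1 : C(Circle, ℂ)) := by
      rw [Algebra.algebraMap_eq_smul_one]
    rw [this]
    exact chiSpan.smul_mem r (chi_zero ▸ chi_mem 0)
  star_mem' := fun hf => chiSpan_star hf

lemma chiAlg_separates : chiAlg.SeparatesPoints := by
  intro x y hxy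
  refine ⟨_, ⟨chi 1, chi_mem 1, rfl⟩, ?_⟩
  simp only [chi_apply, zpow_one]
  exact fun hc => hxy (Circle.coe_injective hc)

lemma chiSpan_dense : Dense (chiSpan : Set C(Circle, ℂ)) := by
  have := ContinuousMap.starSubalgebra_topologicalClosure_eq_top_of_separatesPoints
    chiAlg chiAlg_separates
  rw [dense_iff_closure_eq]
  show closure (chiAlg : Set C(Circle, ℂ)) = Set.univ
  rw [← StarSubalgebra.topologicalClosure_coe, this]
  rfl

lemma lip_integral (μ : Measure Circle) [IsProbabilityMeasure μ] :
    LipschitzWith 1 (fun f : C(Circle, ℂ) => ∫ x, f x ∂μ) := by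
  apply LipschitzWith.of_dist_le_mul
  intro f g
  rw [NNReal.coe_one, one_mul, dist_eq_norm, dist_eq_norm,
    ← integral_sub (integrable_cont μ f.continuous) (integrable_cont μ g.continuous)]
  have h := norm_integral_le_of_norm_le_const (μ := μ)
      (f := fun x : Circle => f x - g x) (C := ‖f - g‖) ?_
  · simpa [measure_univ] using h
  · filter_upwards with x
    calc ‖f x - g x‖ = ‖(f - g) x‖ := by rw [ContinuousMap.sub_apply]
      _ ≤ ‖f - g‖ := (f - g).norm_coe_le_norm x

lemma integral_eq_all (μ ν : Measure Circle) [IsProbabilityMeasure μ] [IsProbabilityMeasure ν]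
    (hchi : ∀ n : ℤ, ∫ x : Circle, chi n x ∂μ = ∫ x : Circle, chi n x ∂ν)
    (f : C(Circle, ℂ)) : ∫ x, f x ∂μ = ∫ x, f x ∂ν := by
  have hspan : ∀ g ∈ chiSpan, ∫ x, (g : C(Circle, ℂ)) x ∂μ = ∫ x, g x ∂ν := by
    intro g hg
    induction hg using Submodule.span_induction with
    | mem g hgm => obtain ⟨m, rfl⟩ := hgm; exact hchi m
    | zero => simp
    | add g₁ g₂ hg₁ hg₂ h₁ h₂ =>
        simp only [ContinuousMap.add_apply]
        rw [integral_add (integrable_cont μ g₁.continuous) (integrable_cont μ g₂.continuous),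
          integral_add (integrable_cont ν g₁.continuous) (integrable_cont ν g₂.continuous), h₁, h₂]
    | smul a g hgg hh =>
        simp only [ContinuousMap.smul_apply]
        rw [integral_smul, integral_smul, hh]
  have := Continuous.ext_on chiSpan_dense (lip_integral μ).continuous (lip_integral ν).continuous
    hspan
  exact congrFun this f

end KHelp

/-- The K-transform characterizes a probability measure on the unit circle completely. -/
theorem Ktransform_injective (μ ν : Measure Circle)
    (hμ : IsProbabilityMeasure μ) (hν : IsProbabilityMeasure ν)
    (h : ∀ z ∈ ball (0 : ℂ) 1, Km μ z = Km ν z) :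
    μ = ν := by
  have hF := KHelp.F_eq_of_Km_eq μ ν h
  have hmom := KHelp.mom_eq_of_F_eq μ ν hF
  have hchi := KHelp.integral_chi_eq μ ν hmom
  have hall := KHelp.integral_eq_all μ ν hchi
  apply MeasureTheory.ext_of_forall_lintegral_eq_of_IsFiniteMeasure
  intro f
  have hg : Continuous fun x : Circle => (((f x : ℝ) : ℂ)) :=
    Complex.continuous_ofReal.comp (NNReal.continuous_coe.comp f.continuous)
  have := hall ⟨fun x => ((f x : ℝ) : ℂ), hg⟩
  simp only [ContinuousMap.coe_mk] at this
  have e1 : ∫ x : Circle, ((f x : ℝ) : ℂ) ∂μ = ((∫ x : Circle, (f x : ℝ) ∂μ : ℝ) : ℂ) :=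
    integral_ofReal
  have e2 : ∫ x : Circle, ((f x : ℝ) : ℂ) ∂ν = ((∫ x : Circle, (f x : ℝ) ∂ν : ℝ) : ℂ) :=
    integral_ofReal
  rw [e1, e2] at this
  have hreal : ∫ x : Circle, (f x : ℝ) ∂μ = ∫ x : Circle, (f x : ℝ) ∂ν :=
    Complex.ofReal_injective this
  have h1 := BoundedContinuousFunction.toReal_lintegral_coe_eq_integral f μ
  have h2 := BoundedContinuousFunction.toReal_lintegral_coe_eq_integral f ν
  have hfin1 := BoundedContinuousFunction.lintegral_lt_top_of_nnreal μ f
  have hfin2 := BoundedContinuousFunction.lintegral_lt_top_of_nnreal ν f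
  rw [← ENNReal.toReal_eq_toReal_iff' hfin1.ne hfin2.ne]
  rw [h1, h2]
  exact hreal
end

section
/- The monotone convolution is affine in its first argument: for probability measures μ₁, μ₂, ν on the unit circle S¹ and t ∈ [0,1], one has (t·μ₁ + (1−t)·μ₂) ▷ ν = t·(μ₁ ▷ ν) + (1−t)·(μ₂ ▷ ν). -/
open MeasureTheory Metric
lemma norm_z_mul_circle (z : ℂ) (x : Circle) : ‖z * (x:ℂ)‖ = ‖z‖ := by
  simp [norm_mul, Circle.norm_coe]

lemma one_sub_ne (z : ℂ) (hz : ‖z‖ < 1) (x : Circle) : 1 - z * x ≠ 0 := by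
  intro h
  have : ‖(1:ℂ)‖ = ‖z * (x:ℂ)‖ := by
    have : (1:ℂ) = z * x := by linear_combination h
    rw [← this]
  simp [norm_z_mul_circle, Circle.norm_coe] at this
  simp [this] at hz

lemma cont_integrand (z : ℂ) (hz : ‖z‖ < 1) :
    Continuous fun x : Circle => z * (x:ℂ) / (1 - z * x) := by
  apply Continuous.div
  · fun_prop
  · fun_prop
  · exact fun x => one_sub_ne z hz x

lemma integrable_integrand (μ : Measure Circle) [IsFiniteMeasure μ] (z : ℂ) (hz : ‖z‖ < 1) :
    Integrable (fun x : Circle => z * (x:ℂ) / (1 - z * x)) μ :=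
  (cont_integrand z hz).integrable_of_hasCompactSupport (HasCompactSupport.of_compactSpace _)

lemma re_aux {w : ℂ} (hw : ‖w‖ < 1) : -(1/2 : ℝ) < (w / (1 - w)).re := by
  have h0 : 1 - w ≠ 0 := by
    intro h
    have : w = 1 := by linear_combination -h
    simp [this] at hw
  have hns : Complex.normSq (1 - w) > 0 := by
    simpa [Complex.normSq_pos] using h0
  have hre : (w / (1 - w)).re = (w.re * (1-w).re + w.im * (1-w).im) / Complex.normSq (1 - w) := by
    rw [Complex.div_re]; ring
  rw [hre]
  have hw2 : Complex.normSq w < 1 := by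
    rw [← Complex.sq_norm]
    nlinarith [norm_nonneg w, hw]
  rw [neg_lt, ← neg_div, div_lt_iff₀ hns]
  simp only [Complex.normSq_apply, Complex.sub_re, Complex.sub_im, Complex.one_re,
    Complex.one_im, Complex.normSq_apply] at hw2 ⊢
  nlinarith

lemma psiM_re_gt (μ : Measure Circle) [hμ : IsProbabilityMeasure μ] {z : ℂ} (hz : ‖z‖ < 1) :
    -(1/2 : ℝ) < (psiM μ z).re := by
  have hint := integrable_integrand μ z hz
  have hre : (psiM μ z).re = ∫ x : Circle, (z * (x:ℂ) / (1 - z * x)).re ∂μ := by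
    have := integral_re (μ := μ) hint
    rw [psiM]
    exact this.symm
  have hcont : Continuous fun x : Circle => (z * (x:ℂ) / (1 - z * x)).re :=
    Complex.continuous_re.comp (cont_integrand z hz)
  obtain ⟨x₀, -, hx₀⟩ := isCompact_univ.exists_isMinOn (Set.univ_nonempty)
    hcont.continuousOn
  have h1 : -(1/2 : ℝ) < (z * (x₀:ℂ) / (1 - z * x₀)).re := by
    have : ‖z * (x₀:ℂ)‖ < 1 := by rwa [norm_z_mul_circle]
    exact re_aux this
  have h2 : (z * (x₀:ℂ) / (1 - z * x₀)).re ≤ (psiM μ z).re := by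
    rw [hre]
    calc (z * (x₀:ℂ) / (1 - z * x₀)).re
        = ∫ _x : Circle, (z * (x₀:ℂ) / (1 - z * x₀)).re ∂μ := by simp
      _ ≤ _ := by
          apply integral_mono (integrable_const _) (hint.re)
          intro x; exact hx₀ (Set.mem_univ x)
  linarith

lemma one_add_psiM_ne (μ : Measure Circle) [IsProbabilityMeasure μ] {z : ℂ} (hz : ‖z‖ < 1) :
    1 + psiM μ z ≠ 0 := by
  intro h
  have : (1 + psiM μ z).re = 0 := by rw [h]; simp
  have h2 := psiM_re_gt μ hz
  simp [Complex.add_re] at this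
  linarith

lemma Km_norm_lt (μ : Measure Circle) [IsProbabilityMeasure μ] {z : ℂ} (hz : ‖z‖ < 1) :
    ‖Km μ z‖ < 1 := by
  have h2 := psiM_re_gt μ hz
  have hne := one_add_psiM_ne μ hz
  rw [Km, norm_div, div_lt_one (norm_pos_iff.mpr hne)]
  have : ‖psiM μ z‖ ^ 2 < ‖1 + psiM μ z‖ ^ 2 := by
    simp only [← Complex.normSq_eq_norm_sq]
    simp [Complex.normSq_apply, Complex.add_re, Complex.add_im]
    nlinarith
  nlinarith [norm_nonneg (psiM μ z), norm_nonneg (1 + psiM μ z)]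

lemma psi_eq_of_Km_eq {a b : ℂ} (ha : 1 + a ≠ 0) (hb : 1 + b ≠ 0)
    (h : a / (1 + a) = b / (1 + b)) : a = b := by
  field_simp at h
  linear_combination h

lemma psiM_affine (μ₁ μ₂ : Measure Circle) [IsFiniteMeasure μ₁] [IsFiniteMeasure μ₂]
    (s r : ENNReal) (hs : s ≠ ⊤) (hr : r ≠ ⊤) {z : ℂ} (hz : ‖z‖ < 1) :
    psiM (s • μ₁ + r • μ₂) z = (s.toReal : ℂ) * psiM μ₁ z + (r.toReal : ℂ) * psiM μ₂ z := by
  rw [psiM, integral_add_measure ((integrable_integrand μ₁ z hz).smul_measure hs)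
    ((integrable_integrand μ₂ z hz).smul_measure hr),
    integral_smul_measure, integral_smul_measure, psiM, psiM]
  simp [Complex.real_smul]

/-- moments -/
noncomputable def momC (μ : Measure Circle) (n : ℕ) : ℂ := ∫ x : Circle, (x:ℂ)^n ∂μ

lemma integrable_pow (μ : Measure Circle) [IsFiniteMeasure μ] (n : ℕ) :
    Integrable (fun x : Circle => (x:ℂ)^n) μ :=
  (by fun_prop : Continuous fun x : Circle => (x:ℂ)^n).integrable_of_hasCompactSupport
    (HasCompactSupport.of_compactSpace _)

lemma norm_momC_le (μ : Measure Circle) [IsProbabilityMeasure μ] (n : ℕ) : ‖momC μ n‖ ≤ 1 := by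
  have := norm_integral_le_of_norm_le_const (μ := μ)
    (f := fun x : Circle => (x:ℂ)^n) (C := 1) ?_
  · simpa [momC] using this
  · filter_upwards with x
    simp [norm_pow, Circle.norm_coe]

lemma hasSum_psiM (μ : Measure Circle) [IsProbabilityMeasure μ] {z : ℂ} (hz : ‖z‖ < 1) :
    HasSum (fun n : ℕ => momC μ (n+1) * z^(n+1)) (psiM μ z) := by
  have key := hasSum_integral_of_summable_integral_norm (μ := μ)
    (F := fun (n : ℕ) (x : Circle) => (z * x)^(n+1)) ?_ ?_
  · have h1 : ∀ x : Circle, ∑' n : ℕ, (z * (x:ℂ))^(n+1) = z * x / (1 - z * x) := by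
      intro x
      have hn : ‖z * (x:ℂ)‖ < 1 := by rwa [norm_z_mul_circle]
      have := (hasSum_geometric_of_norm_lt_one hn).mul_left (z * x)
      have h2 : HasSum (fun n : ℕ => (z * (x:ℂ))^(n+1)) (z * x * (1 - z * x)⁻¹) := by
        rw [show (fun n : ℕ => (z * (x:ℂ))^(n+1)) = fun n => z * x * (z * x)^n from
          funext fun n => pow_succ' _ n]
        exact this
      rw [h2.tsum_eq, div_eq_mul_inv]
    have h3 : ∀ n : ℕ, ∫ x : Circle, (z * (x:ℂ))^(n+1) ∂μ = momC μ (n+1) * z^(n+1) := by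
      intro n
      simp_rw [mul_pow, momC]
      rw [integral_const_mul]
      ring
    simp_rw [h1, h3] at key
    exact key
  · intro n
    exact (by fun_prop : Continuous fun x : Circle => (z * (x:ℂ))^(n+1)).integrable_of_hasCompactSupport
      (HasCompactSupport.of_compactSpace _)
  · have : ∀ n : ℕ, ∫ x : Circle, ‖(z * (x:ℂ))^(n+1)‖ ∂μ = ‖z‖^(n+1) := by
      intro n
      simp_rw [norm_pow, norm_z_mul_circle]
      simp
    rw [show (fun n : ℕ => ∫ x : Circle, ‖(z * (x:ℂ))^(n+1)‖ ∂μ) = fun n => ‖z‖^(n+1) from funext this]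
    have := (summable_geometric_of_lt_one (norm_nonneg z) hz).mul_left ‖z‖
    rw [show (fun n : ℕ => ‖z‖^(n+1)) = fun n => ‖z‖ * ‖z‖^n from
      funext fun n => pow_succ' _ n]
    exact this

noncomputable def coefC (μ : Measure Circle) (n : ℕ) : ℂ := if n = 0 then 0 else momC μ n

noncomputable def psSeries (μ : Measure Circle) : FormalMultilinearSeries ℂ ℂ ℂ :=
  fun n => ContinuousMultilinearMap.mkPiRing ℂ (Fin n) (coefC μ n)

lemma psSeries_apply (μ : Measure Circle) (n : ℕ) (y : ℂ) :
    (psSeries μ n) (fun _ => y) = coefC μ n * y^n := by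
  simp [psSeries, ContinuousMultilinearMap.mkPiRing_apply, smul_eq_mul]
  ring

lemma hasFPower_psiM (μ : Measure Circle) [IsProbabilityMeasure μ] :
    HasFPowerSeriesOnBall (psiM μ) (psSeries μ) 0 1 := by
  constructor
  · apply ENNReal.le_of_forall_nnreal_lt
    intro r hr
    apply FormalMultilinearSeries.le_radius_of_bound _ 1
    intro n
    have h1 : ‖psSeries μ n‖ ≤ 1 := by
      rw [psSeries, ContinuousMultilinearMap.norm_mkPiRing]
      rcases eq_or_ne n 0 with h | h
      · simp [coefC, h]
      · simp only [coefC, if_neg h]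
        exact norm_momC_le μ n
    have h2 : (r:ℝ)^n ≤ 1 := by
      apply pow_le_one₀ r.coe_nonneg
      exact_mod_cast le_of_lt (by exact_mod_cast hr)
    nlinarith [norm_nonneg (psSeries μ n), pow_nonneg r.coe_nonneg n]
  · exact one_pos
  · intro y hy
    rw [EMetric.mem_ball, edist_zero_right] at hy
    have hy' : ‖y‖ < 1 := by rw [enorm_eq_nnnorm] at hy; exact_mod_cast hy
    have base := hasSum_psiM μ hy'
    simp only [psSeries_apply, zero_add]
    refine (hasSum_nat_add_iff' (f := fun n => coefC μ n * y^n) (g := psiM μ y) 1).mp ?_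
    · have hz0 : ∑ i ∈ Finset.range 1, coefC μ i * y ^ i = 0 := by
        simp [coefC]
      rw [hz0, sub_zero]
      simpa [coefC] using base

lemma momC_eq_of_psiM_eq (ρ σ : Measure Circle) [IsProbabilityMeasure ρ] [IsProbabilityMeasure σ]
    (h : ∀ z : ℂ, ‖z‖ < 1 → psiM ρ z = psiM σ z) : ∀ n : ℕ, momC ρ n = momC σ n := by
  have hp := (hasFPower_psiM ρ).hasFPowerSeriesAt
  have hq := (hasFPower_psiM σ).hasFPowerSeriesAt
  have heq : psiM ρ =ᶠ[nhds 0] psiM σ := by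
    filter_upwards [Metric.ball_mem_nhds (0:ℂ) one_pos] with z hz
    exact h z (by rwa [mem_ball_zero_iff] at hz)
  have hps : psSeries ρ = psSeries σ := hp.eq_formalMultilinearSeries_of_eventually hq heq
  intro n
  rcases eq_or_ne n 0 with rfl | hn
  · simp [momC]
  · have h1 : (psSeries ρ n) (fun _ => 1) = (psSeries σ n) (fun _ => 1) := by rw [hps]
    rw [psSeries_apply, psSeries_apply] at h1
    simpa [coefC, hn] using h1

noncomputable def zchar (n : ℤ) : C(Circle, ℂ) :=
  ⟨fun x => ((x ^ n : Circle) : ℂ), by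
    exact continuous_subtype_val.comp (continuous_zpow n)⟩

lemma zchar_apply (n : ℤ) (x : Circle) : zchar n x = ((x ^ n : Circle) : ℂ) := rfl

lemma zchar_mul (m n : ℤ) : zchar m * zchar n = zchar (m + n) := by
  ext x
  simp [zchar_apply, zpow_add]

lemma zchar_star (n : ℤ) : star (zchar n) = zchar (-n) := by
  ext x
  simp only [ContinuousMap.star_apply, zchar_apply, zpow_neg]
  rw [RCLike.star_def, ← Circle.coe_inv_eq_conj]

noncomputable def circleSubalg : StarSubalgebra ℂ C(Circle, ℂ) where
  toSubalgebra := Algebra.adjoin ℂ (Set.range zchar)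
  star_mem' := by
    show Algebra.adjoin ℂ (Set.range zchar) ≤
        star (Algebra.adjoin ℂ (Set.range zchar))
    refine Algebra.adjoin_le ?_
    rintro - ⟨n, rfl⟩
    exact Algebra.subset_adjoin ⟨-n, (zchar_star n).symm⟩

lemma circleSubalg_sep : circleSubalg.SeparatesPoints := by
  intro x y hxy
  refine ⟨_, ⟨zchar 1, Algebra.subset_adjoin ⟨1, rfl⟩, rfl⟩, ?_⟩
  simp only [zchar_apply, zpow_one]
  exact fun h => hxy (Subtype.coe_injective h)

lemma circleSubalg_closure : circleSubalg.topologicalClosure = ⊤ :=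
  ContinuousMap.starSubalgebra_topologicalClosure_eq_top_of_separatesPoints circleSubalg
    circleSubalg_sep

lemma circleSubalg_coe :
    Subalgebra.toSubmodule circleSubalg.toSubalgebra = Submodule.span ℂ (Set.range zchar) := by
  apply Algebra.adjoin_eq_span_of_subset
  refine Set.Subset.trans ?_ Submodule.subset_span
  intro x hx
  refine Submonoid.closure_induction (fun _ => id) ⟨0, ?_⟩ ?_ hx
  · ext1 z; simp [zchar_apply]
  · rintro - - - - ⟨m, rfl⟩ ⟨n, rfl⟩
    exact ⟨m + n, (zchar_mul m n).symm⟩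

lemma span_zchar_closure :
    (Submodule.span ℂ (Set.range zchar)).topologicalClosure = ⊤ := by
  rw [← circleSubalg_coe]
  exact congr_arg (Subalgebra.toSubmodule <| StarSubalgebra.toSubalgebra ·) circleSubalg_closure

lemma integrable_cm (μ : Measure Circle) [IsFiniteMeasure μ] (f : C(Circle, ℂ)) :
    Integrable (fun x => f x) μ :=
  f.continuous.integrable_of_hasCompactSupport (HasCompactSupport.of_compactSpace _)

lemma integral_cm_eq (ρ σ : Measure Circle) [IsProbabilityMeasure ρ] [IsProbabilityMeasure σ]
    (h : ∀ n : ℤ, ∫ x : Circle, ((x ^ n : Circle) : ℂ) ∂ρ = ∫ x : Circle, ((x ^ n : Circle) : ℂ) ∂σ) :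
    ∀ f : C(Circle, ℂ), ∫ x, f x ∂ρ = ∫ x, f x ∂σ := by
  set l : C(Circle, ℂ) →ₗ[ℂ] ℂ :=
    { toFun := fun f => (∫ x, f x ∂ρ) - ∫ x, f x ∂σ
      map_add' := fun f g => by
        simp only [ContinuousMap.add_apply]
        rw [integral_add (integrable_cm ρ f) (integrable_cm ρ g),
          integral_add (integrable_cm σ f) (integrable_cm σ g)]
        ring
      map_smul' := fun c f => by
        simp only [ContinuousMap.smul_apply, smul_eq_mul, RingHom.id_apply]
        rw [integral_const_mul, integral_const_mul]
        ring } with hl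
  have hbound : ∀ f : C(Circle, ℂ), ‖l f‖ ≤ 2 * ‖f‖ := by
    intro f
    have h1 : ‖∫ x, f x ∂ρ‖ ≤ ‖f‖ := by
      have := norm_integral_le_of_norm_le_const (μ := ρ) (f := fun x => f x) (C := ‖f‖)
        (Filter.Eventually.of_forall fun x => f.norm_coe_le_norm x)
      simpa using this
    have h2 : ‖∫ x, f x ∂σ‖ ≤ ‖f‖ := by
      have := norm_integral_le_of_norm_le_const (μ := σ) (f := fun x => f x) (C := ‖f‖)
        (Filter.Eventually.of_forall fun x => f.norm_coe_le_norm x)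
      simpa using this
    calc ‖l f‖ ≤ ‖∫ x, f x ∂ρ‖ + ‖∫ x, f x ∂σ‖ := norm_sub_le _ _
      _ ≤ 2 * ‖f‖ := by linarith
  set L : C(Circle, ℂ) →L[ℂ] ℂ := LinearMap.mkContinuous l 2 hbound with hL
  have hker : Submodule.span ℂ (Set.range zchar) ≤ LinearMap.ker (L : C(Circle, ℂ) →ₗ[ℂ] ℂ) := by
    rw [Submodule.span_le]
    rintro - ⟨n, rfl⟩
    simp only [SetLike.mem_coe, LinearMap.mem_ker]
    show l (zchar n) = 0
    simp only [hl, LinearMap.coe_mk, AddHom.coe_mk]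
    rw [show (fun x => zchar n x) = fun x : Circle => ((x ^ n : Circle) : ℂ) from rfl]
    rw [h n]; ring
  have hclosed : IsClosed (LinearMap.ker (L : C(Circle, ℂ) →ₗ[ℂ] ℂ) : Set C(Circle, ℂ)) :=
    ContinuousLinearMap.isClosed_ker L
  have htop : (⊤ : Submodule ℂ C(Circle, ℂ)) ≤ LinearMap.ker (L : C(Circle, ℂ) →ₗ[ℂ] ℂ) := by
    rw [← span_zchar_closure]
    exact Submodule.topologicalClosure_minimal _ hker hclosed
  intro f
  have : L f = 0 := htop (Submodule.mem_top) 
  have : l f = 0 := this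
  simpa [hl, sub_eq_zero] using this

lemma measure_eq_of_integral_cm (ρ σ : Measure Circle) [IsProbabilityMeasure ρ]
    [IsProbabilityMeasure σ] (h : ∀ f : C(Circle, ℂ), ∫ x, f x ∂ρ = ∫ x, f x ∂σ) : ρ = σ := by
  apply ext_of_forall_lintegral_eq_of_IsFiniteMeasure
  intro g
  have hgc : Continuous fun x : Circle => ((g x : ℝ) : ℂ) := by
    exact Complex.continuous_ofReal.comp (NNReal.continuous_coe.comp g.continuous)
  have key := h ⟨fun x => ((g x : ℝ) : ℂ), hgc⟩
  simp only [ContinuousMap.coe_mk] at key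
  have e1 : ∫ x : Circle, ((g x : ℝ) : ℂ) ∂ρ = ((∫ x : Circle, (g x : ℝ) ∂ρ : ℝ) : ℂ) :=
    integral_ofReal
  have e2 : ∫ x : Circle, ((g x : ℝ) : ℂ) ∂σ = ((∫ x : Circle, (g x : ℝ) ∂σ : ℝ) : ℂ) :=
    integral_ofReal
  rw [e1, e2] at key
  have hre : ∫ x : Circle, (g x : ℝ) ∂ρ = ∫ x : Circle, (g x : ℝ) ∂σ := by
    exact_mod_cast key
  have hint : ∀ μ : Measure Circle, IsFiniteMeasure μ → Integrable (fun x : Circle => (g x : ℝ)) μ := by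
    intro μ hμ
    exact (NNReal.continuous_coe.comp g.continuous).integrable_of_hasCompactSupport
      (HasCompactSupport.of_compactSpace _)
  rw [lintegral_coe_eq_integral (fun x => g x) (hint ρ inferInstance),
    lintegral_coe_eq_integral (fun x => g x) (hint σ inferInstance)]
  exact congrArg ENNReal.ofReal hre

/-- The monotone convolution is affine in its first argument:
`(t μ₁ + (1-t) μ₂) ▷ ν = t (μ₁ ▷ ν) + (1-t) (μ₂ ▷ ν)`, where `▷` is characterized by
`K_{μ ▷ ν} = K_μ ∘ K_ν` on the open unit disc. -/
theorem monotone_convolution_affine (μ₁ μ₂ ν : Measure Circle)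
    (hμ₁ : IsProbabilityMeasure μ₁) (hμ₂ : IsProbabilityMeasure μ₂)
    (hν : IsProbabilityMeasure ν)
    (t : ENNReal) (ht : t ≤ 1)
    (ρ₁ ρ₂ ρ : Measure Circle)
    (hρ₁ : IsProbabilityMeasure ρ₁) (hρ₂ : IsProbabilityMeasure ρ₂)
    (hρ : IsProbabilityMeasure ρ)
    (hKρ₁ : ∀ z ∈ ball (0 : ℂ) 1, Km ρ₁ z = Km μ₁ (Km ν z))
    (hKρ₂ : ∀ z ∈ ball (0 : ℂ) 1, Km ρ₂ z = Km μ₂ (Km ν z))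
    (hKρ : ∀ z ∈ ball (0 : ℂ) 1, Km ρ z = Km (t • μ₁ + (1 - t) • μ₂) (Km ν z)) :
    ρ = t • ρ₁ + (1 - t) • ρ₂ := by
  have ht' : t ≠ ⊤ := (lt_of_le_of_lt ht ENNReal.one_lt_top).ne
  have ht'' : (1 - t) ≠ ⊤ := (lt_of_le_of_lt tsub_le_self ENNReal.one_lt_top).ne
  set M : Measure Circle := t • μ₁ + (1 - t) • μ₂ with hM
  set σ : Measure Circle := t • ρ₁ + (1 - t) • ρ₂ with hσ
  have probM : IsProbabilityMeasure M := by
    constructor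
    simp only [hM, Measure.add_apply, Measure.smul_apply, measure_univ, smul_eq_mul, mul_one]
    rw [add_comm]
    exact tsub_add_cancel_of_le ht
  have probσ : IsProbabilityMeasure σ := by
    constructor
    simp only [hσ, Measure.add_apply, Measure.smul_apply, measure_univ, smul_eq_mul, mul_one]
    rw [add_comm]
    exact tsub_add_cancel_of_le ht
  have hpsi : ∀ z : ℂ, ‖z‖ < 1 → psiM ρ z = psiM σ z := by
    intro z hz
    have hzb : z ∈ ball (0 : ℂ) 1 := by rwa [mem_ball_zero_iff]
    set w : ℂ := Km ν z with hwd
    have hw : ‖w‖ < 1 := Km_norm_lt ν hz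
    have h1 : psiM ρ₁ z = psiM μ₁ w :=
      psi_eq_of_Km_eq (one_add_psiM_ne ρ₁ hz) (one_add_psiM_ne μ₁ hw) (hKρ₁ z hzb)
    have h2 : psiM ρ₂ z = psiM μ₂ w :=
      psi_eq_of_Km_eq (one_add_psiM_ne ρ₂ hz) (one_add_psiM_ne μ₂ hw) (hKρ₂ z hzb)
    have h3 : psiM ρ z = psiM M w :=
      psi_eq_of_Km_eq (one_add_psiM_ne ρ hz) (one_add_psiM_ne M hw) (hKρ z hzb)
    rw [h3, hM, hσ, psiM_affine μ₁ μ₂ t (1-t) ht' ht'' hw,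
      psiM_affine ρ₁ ρ₂ t (1-t) ht' ht'' hz, h1, h2]
  have hmom := momC_eq_of_psiM_eq ρ σ hpsi
  have hmomZ : ∀ n : ℤ, ∫ x : Circle, ((x ^ n : Circle) : ℂ) ∂ρ
      = ∫ x : Circle, ((x ^ n : Circle) : ℂ) ∂σ := by
    intro n
    rcases n with m | m
    · have := hmom m
      simpa [momC, zpow_natCast] using this
    · have := hmom (m + 1)
      have hconj : ∀ (μ : Measure Circle) (x : Circle),
          ((x ^ Int.negSucc m : Circle) : ℂ) = (starRingEnd ℂ) ((x : ℂ) ^ (m+1)) := by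
        intro μ x
        rw [Int.negSucc_eq, zpow_neg, Circle.coe_inv_eq_conj]
        norm_cast
      calc ∫ x : Circle, ((x ^ Int.negSucc m : Circle) : ℂ) ∂ρ
          = ∫ x : Circle, (starRingEnd ℂ) ((x : ℂ) ^ (m+1)) ∂ρ := by
            simp_rw [hconj ρ]
        _ = (starRingEnd ℂ) (∫ x : Circle, (x : ℂ) ^ (m+1) ∂ρ) := integral_conj
        _ = (starRingEnd ℂ) (∫ x : Circle, (x : ℂ) ^ (m+1) ∂σ) := by
            rw [show (∫ x : Circle, (x : ℂ) ^ (m+1) ∂ρ) = momC ρ (m+1) from rfl,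
              show (∫ x : Circle, (x : ℂ) ^ (m+1) ∂σ) = momC σ (m+1) from rfl, this]
        _ = ∫ x : Circle, (starRingEnd ℂ) ((x : ℂ) ^ (m+1)) ∂σ := integral_conj.symm
        _ = ∫ x : Circle, ((x ^ Int.negSucc m : Circle) : ℂ) ∂σ := by
            simp_rw [hconj σ]
  exact measure_eq_of_integral_cm ρ σ (integral_cm_eq ρ σ hmomZ)
end

section
/- The monotone convolution is weakly continuous: if (μ_n) and (ν_n) are sequences of probability measures on the unit circle S¹ converging weakly to probability measures μ and ν respectively, then μ_n ▷ ν_n converges weakly to μ ▷ ν. -/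
open MeasureTheory Metric

open Filter Topology

namespace MCAux

open Complex

lemma norm_circle (x : Circle) : ‖(x : ℂ)‖ = 1 := by
  rw [Circle.norm_coe]

lemma one_sub_ne {z : ℂ} (hz : ‖z‖ < 1) (x : Circle) : (1 : ℂ) - z * x ≠ 0 := by
  intro h
  rw [sub_eq_zero] at h
  have h1 : ‖z * (x : ℂ)‖ = ‖z‖ := by rw [norm_mul, norm_circle, mul_one]
  rw [← h, norm_one] at h1
  linarith

lemma norm_one_sub_ge (z : ℂ) (x : Circle) : 1 - ‖z‖ ≤ ‖1 - z * x‖ := by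
  have h := norm_sub_norm_le (1 : ℂ) (z * x)
  rw [norm_one, norm_mul, norm_circle, mul_one] at h
  exact h

lemma continuous_coe : Continuous fun x : Circle => (x : ℂ) := continuous_subtype_val

lemma integrable_cont {σ : Measure Circle} [IsFiniteMeasure σ] {f : Circle → ℂ}
    (hf : Continuous f) : Integrable f σ := by
  obtain ⟨C, hC⟩ := (isCompact_univ (X := Circle)).exists_bound_of_continuousOn hf.continuousOn
  exact ⟨hf.aestronglyMeasurable,
    HasFiniteIntegral.of_bounded (C := C) (ae_of_all _ fun x => hC x trivial)⟩

lemma cont_ker {z : ℂ} (hz : ‖z‖ < 1) : Continuous fun x : Circle => z * x / (1 - z * x) :=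
  (continuous_const.mul continuous_coe).div
    (continuous_const.sub (continuous_const.mul continuous_coe)) fun x => one_sub_ne hz x

variable {σ : Measure Circle} [IsProbabilityMeasure σ] {z : ℂ}

lemma integrable_ker (hz : ‖z‖ < 1) : Integrable (fun x : Circle => z * x / (1 - z * x)) σ :=
  integrable_cont (cont_ker hz)

lemma re_ker_ge (hz : ‖z‖ < 1) (x : Circle) :
    -(1 / 2) + (1 - ‖z‖ ^ 2) / (2 * (1 + ‖z‖) ^ 2) ≤ ((z * x) / (1 - z * x)).re := by
  set w : ℂ := z * x with hw
  have hwn : ‖w‖ = ‖z‖ := by rw [hw, norm_mul, norm_circle, mul_one]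
  have hne : (1 : ℂ) - w ≠ 0 := one_sub_ne hz x
  have hid : w / (1 - w) = -1 + (1 - w)⁻¹ := by field_simp; ring
  rw [hid]
  have hre : (-1 + (1 - w)⁻¹).re = -1 + (1 - w).re / normSq (1 - w) := by
    simp [Complex.add_re, Complex.inv_re]
  rw [hre]
  have hN : 0 < normSq (1 - w) := normSq_pos.mpr hne
  have hNs : normSq (1 - w) = (1 - w.re) ^ 2 + w.im ^ 2 := by
    simp [normSq_apply]; ring
  have hws : w.re ^ 2 + w.im ^ 2 = ‖z‖ ^ 2 := by
    have : normSq w = ‖w‖ ^ 2 := by rw [normSq_eq_norm_sq]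
    rw [hwn] at this
    simpa [normSq_apply, sq] using this
  have hNle : normSq (1 - w) ≤ (1 + ‖z‖) ^ 2 := by
    have h1 : ‖(1 : ℂ) - w‖ ≤ 1 + ‖z‖ := by
      calc ‖(1 : ℂ) - w‖ ≤ ‖(1 : ℂ)‖ + ‖w‖ := norm_sub_le _ _
        _ = 1 + ‖z‖ := by rw [norm_one, hwn]
    have h2 : normSq (1 - w) = ‖(1 : ℂ) - w‖ ^ 2 := by rw [normSq_eq_norm_sq]
    rw [h2]
    have : (0:ℝ) ≤ ‖(1:ℂ) - w‖ := norm_nonneg _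
    nlinarith
  have hkey : 2 * (1 - w).re - normSq (1 - w) = 1 - ‖z‖ ^ 2 := by
    rw [hNs]
    have : (1 - w).re = 1 - w.re := by simp
    rw [this]
    nlinarith [hws]
  have hz1 : ‖z‖ < 1 := hz
  have hz0 : (0:ℝ) ≤ ‖z‖ := norm_nonneg _
  have e : (1 - w).re / normSq (1 - w) - 1 / 2 = (1 - ‖z‖ ^ 2) / (2 * normSq (1 - w)) := by
    rw [eq_div_iff (by positivity), ← hkey]
    field_simp
  have key2 : (1 - ‖z‖ ^ 2) / (2 * (1 + ‖z‖) ^ 2) ≤ (1 - w).re / normSq (1 - w) - 1 / 2 := by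
    rw [e]
    apply div_le_div_of_nonneg_left (by nlinarith) (by positivity) (by nlinarith)
  linarith

lemma re_psi_gt (hz : ‖z‖ < 1) : -(1 / 2) < (psiM σ z).re := by
  have hint := integrable_ker (σ := σ) hz
  have h1 : (psiM σ z).re = ∫ x, ((z * x) / (1 - z * x)).re ∂σ := by
    rw [psiM]
    have := integral_re (𝕜 := ℂ) hint
    simpa using this.symm
  have h2 : ∫ (_ : Circle), (-(1 / 2) + (1 - ‖z‖ ^ 2) / (2 * (1 + ‖z‖) ^ 2)) ∂σ ≤
      ∫ x, ((z * x) / (1 - z * x)).re ∂σ := by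
    refine integral_mono (integrable_const _) ?_ (fun x => re_ker_ge hz x)
    exact hint.re
  rw [integral_const] at h2
  simp only [probReal_univ, one_smul] at h2
  have hc : 0 < (1 - ‖z‖ ^ 2) / (2 * (1 + ‖z‖) ^ 2) := by
    apply div_pos (by nlinarith [norm_nonneg z]) (by positivity)
  rw [h1]
  linarith

lemma one_add_psi_ne (hz : ‖z‖ < 1) : 1 + psiM σ z ≠ 0 := by
  intro h
  have h1 := re_psi_gt (σ := σ) hz
  have h2 : (1 + psiM σ z).re = 0 := by rw [h]; simp
  simp only [Complex.add_re, Complex.one_re] at h2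
  linarith

lemma norm_Km_lt (hz : ‖z‖ < 1) : ‖Km σ z‖ < 1 := by
  have hne := one_add_psi_ne (σ := σ) hz
  have hre := re_psi_gt (σ := σ) hz
  rw [Km, norm_div, div_lt_one (norm_pos_iff.mpr hne)]
  have hsq : ‖psiM σ z‖ ^ 2 < ‖1 + psiM σ z‖ ^ 2 := by
      have e1 : ‖psiM σ z‖ ^ 2 = normSq (psiM σ z) := by rw [normSq_eq_norm_sq]
      have e2 : ‖1 + psiM σ z‖ ^ 2 = normSq (1 + psiM σ z) := by rw [normSq_eq_norm_sq]
      rw [e1, e2]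
      simp only [normSq_apply, Complex.add_re, Complex.add_im, Complex.one_re, Complex.one_im]
      nlinarith
  exact lt_of_pow_lt_pow_left₀ 2 (norm_nonneg _) hsq

lemma one_sub_Km_ne (hz : ‖z‖ < 1) : 1 - Km σ z ≠ 0 := by
  intro h
  rw [sub_eq_zero] at h
  have := norm_Km_lt (σ := σ) hz
  rw [← h] at this
  simp at this

lemma psi_eq_Km (hz : ‖z‖ < 1) : psiM σ z = Km σ z / (1 - Km σ z) := by
  have h1 := one_add_psi_ne (σ := σ) hz
  rw [Km]
  have h2 : (1 : ℂ) - psiM σ z / (1 + psiM σ z) = 1 / (1 + psiM σ z) := by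
    field_simp
    ring
  rw [h2]
  field_simp

lemma psi_lip {r : ℝ} (hr : r < 1) {z w : ℂ} (hz : ‖z‖ ≤ r) (hw : ‖w‖ ≤ r) :
    ‖psiM σ z - psiM σ w‖ ≤ ‖z - w‖ / (1 - r) ^ 2 := by
  have hz1 : ‖z‖ < 1 := lt_of_le_of_lt hz hr
  have hw1 : ‖w‖ < 1 := lt_of_le_of_lt hw hr
  have hbound : ∀ x : Circle,
      ‖z * x / (1 - z * x) - w * x / (1 - w * x)‖ ≤ ‖z - w‖ / (1 - r) ^ 2 := by
    intro x
    have h1 : z * x / (1 - z * x) - w * x / (1 - w * x) =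
        ((z - w) * x) / ((1 - z * x) * (1 - w * x)) := by
      rw [div_sub_div _ _ (one_sub_ne hz1 x) (one_sub_ne hw1 x)]
      congr 1
      ring
    rw [h1, norm_div, norm_mul, norm_circle, mul_one, norm_mul]
    have hb1 : 1 - r ≤ ‖1 - z * x‖ := le_trans (by linarith [norm_one_sub_ge z x]) (le_refl _)
    have hb1' : 1 - r ≤ ‖1 - z * x‖ := by
      have := norm_one_sub_ge z x; linarith
    have hb2 : 1 - r ≤ ‖1 - w * x‖ := by
      have := norm_one_sub_ge w x; linarith
    have hrpos : (0:ℝ) < 1 - r := by linarith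
    rw [sq]
    gcongr
  rw [psiM, psiM, ← integral_sub (integrable_ker hz1) (integrable_ker hw1)]
  calc ‖∫ x, (z * x / (1 - z * x) - w * x / (1 - w * x)) ∂σ‖
      ≤ (‖z - w‖ / (1 - r) ^ 2) * (σ Set.univ).toReal :=
        norm_integral_le_of_norm_le_const (ae_of_all _ hbound)
    _ = ‖z - w‖ / (1 - r) ^ 2 := by simp

lemma psi_repr (hz : ‖z‖ < 1) :
    psiM σ z = ((∫ x : Circle, ((z * x) / (1 - z * x)).re ∂σ : ℝ) : ℂ) +
      ((∫ x : Circle, ((z * x) / (1 - z * x)).im ∂σ : ℝ) : ℂ) * Complex.I := by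
  have hint := integrable_ker (σ := σ) hz
  rw [psiM, ← integral_coe_re_add_coe_im hint]
  rw [integral_ofReal, integral_ofReal]
  simp

lemma psi_tendsto {μs : ℕ → ProbabilityMeasure Circle} {μl : ProbabilityMeasure Circle}
    (h : Tendsto μs atTop (𝓝 μl)) (hz : ‖z‖ < 1) :
    Tendsto (fun n => psiM (μs n) z) atTop (𝓝 (psiM μl z)) := by
  have hc := cont_ker hz
  set fre : ContinuousMap Circle ℝ := ⟨fun x => ((z * x) / (1 - z * x)).re,
    Complex.continuous_re.comp hc⟩ with hfre
  set fim : ContinuousMap Circle ℝ := ⟨fun x => ((z * x) / (1 - z * x)).im,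
    Complex.continuous_im.comp hc⟩ with hfim
  have hre := ProbabilityMeasure.tendsto_iff_forall_integral_tendsto.mp h
    (BoundedContinuousFunction.mkOfCompact fre)
  have him := ProbabilityMeasure.tendsto_iff_forall_integral_tendsto.mp h
    (BoundedContinuousFunction.mkOfCompact fim)
  simp only [BoundedContinuousFunction.mkOfCompact_apply] at hre him
  have heq : (fun n => psiM (μs n) z) = fun n =>
      ((∫ x : Circle, fre x ∂(μs n) : ℝ) : ℂ) +
      ((∫ x : Circle, fim x ∂(μs n) : ℝ) : ℂ) * Complex.I := by
    funext n
    exact psi_repr hz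
  rw [heq, psi_repr (σ := (μl : Measure Circle)) hz]
  exact ((Complex.continuous_ofReal.tendsto _).comp hre).add
    (((Complex.continuous_ofReal.tendsto _).comp him).mul_const Complex.I)

lemma ker_partial (hz : ‖z‖ < 1) (x : Circle) (k : ℕ) :
    z * x / (1 - z * x) =
      (∑ j ∈ Finset.range k, (z * x) ^ (j + 1)) + (z * x) ^ (k + 1) / (1 - z * x) := by
  induction k with
  | zero => simp
  | succ k ih =>
    rw [ih, Finset.sum_range_succ]
    have hne := one_sub_ne hz x
    field_simp
    ring

lemma psi_partial (hz : ‖z‖ ≤ 1 / 2) (k : ℕ) :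
    ‖psiM σ z - ∑ j ∈ Finset.range k, (∫ x : Circle, (x : ℂ) ^ (j + 1) ∂σ) * z ^ (j + 1)‖ ≤
      2 * ‖z‖ ^ (k + 1) := by
  have hz1 : ‖z‖ < 1 := by linarith
  have hrem_cont : Continuous fun x : Circle => (z * x) ^ (k + 1) / (1 - z * x) :=
    ((continuous_const.mul continuous_coe).pow _).div
      (continuous_const.sub (continuous_const.mul continuous_coe)) fun x => one_sub_ne hz1 x
  have hrem_int : Integrable (fun x : Circle => (z * x) ^ (k + 1) / (1 - z * x)) σ :=
    integrable_cont hrem_cont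
  have hterm_int : ∀ j : ℕ, Integrable (fun x : Circle => (z * (x : ℂ)) ^ (j + 1)) σ :=
    fun j => integrable_cont ((continuous_const.mul continuous_coe).pow _)
  have h1 : psiM σ z =
      (∑ j ∈ Finset.range k, (∫ x : Circle, (x : ℂ) ^ (j + 1) ∂σ) * z ^ (j + 1)) +
        ∫ x : Circle, (z * x) ^ (k + 1) / (1 - z * x) ∂σ := by
    rw [psiM]
    have e1 : ∫ x : Circle, z * x / (1 - z * x) ∂σ =
        ∫ x : Circle, ((∑ j ∈ Finset.range k, (z * (x : ℂ)) ^ (j + 1)) +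
          (z * x) ^ (k + 1) / (1 - z * x)) ∂σ := by
      congr 1
      funext x
      exact ker_partial hz1 x k
    rw [e1, integral_add (integrable_finset_sum _ fun j _ => hterm_int j) hrem_int,
      integral_finset_sum _ fun j _ => hterm_int j]
    congr 1
    apply Finset.sum_congr rfl
    intro j _
    have e2 : ∀ x : Circle, (z * (x : ℂ)) ^ (j + 1) = z ^ (j + 1) * (x : ℂ) ^ (j + 1) := by
      intro x; rw [mul_pow]
    simp_rw [e2]
    rw [integral_const_mul]
    exact mul_comm _ _
  rw [h1, add_sub_cancel_left]
  have hbound : ∀ x : Circle, ‖(z * x) ^ (k + 1) / (1 - z * x)‖ ≤ 2 * ‖z‖ ^ (k + 1) := by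
    intro x
    rw [norm_div, norm_pow, norm_mul, norm_circle, mul_one]
    have hb : (1:ℝ) / 2 ≤ ‖1 - z * x‖ := by
      have := norm_one_sub_ge z x; linarith
    calc ‖z‖ ^ (k + 1) / ‖1 - z * x‖ ≤ ‖z‖ ^ (k + 1) / (1 / 2) := by
          gcongr
      _ = 2 * ‖z‖ ^ (k + 1) := by ring
  calc ‖∫ x : Circle, (z * x) ^ (k + 1) / (1 - z * x) ∂σ‖
      ≤ (2 * ‖z‖ ^ (k + 1)) * (σ Set.univ).toReal :=
        norm_integral_le_of_norm_le_const (ae_of_all _ hbound)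
    _ = 2 * ‖z‖ ^ (k + 1) := by simp


lemma mom_tendsto {ρs : ℕ → ProbabilityMeasure Circle} {ρl : ProbabilityMeasure Circle}
    (hpsi : ∀ t : ℝ, 0 < t → t ≤ 1 / 2 →
      Tendsto (fun n => psiM (ρs n) (t : ℂ)) atTop (𝓝 (psiM ρl (t : ℂ)))) :
    ∀ k : ℕ, Tendsto (fun n => ∫ x : Circle, (x : ℂ) ^ k ∂(ρs n)) atTop
      (𝓝 (∫ x : Circle, (x : ℂ) ^ k ∂(ρl : Measure Circle))) := by
  intro k
  induction k using Nat.strong_induction_on with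
  | _ k IH =>
    match k with
    | 0 => simp
    | (K + 1) =>
      have main : Tendsto (fun n => (∫ x : Circle, (x : ℂ) ^ (K + 1) ∂(ρs n)) -
          ∫ x : Circle, (x : ℂ) ^ (K + 1) ∂(ρl : Measure Circle)) atTop (𝓝 0) := by
        rw [NormedAddCommGroup.tendsto_nhds_zero]
        intro ε hε
        set t : ℝ := min (1 / 2) (ε / 12) with htdef
        have ht0 : 0 < t := lt_min (by norm_num) (by linarith)
        have ht2 : t ≤ 1 / 2 := min_le_left _ _
        have htε : t ≤ ε / 12 := min_le_right _ _
        have hzt : ‖((t : ℝ) : ℂ)‖ = t := by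
          rw [Complex.norm_real]
          exact abs_of_pos ht0
        have hz2 : ‖((t : ℝ) : ℂ)‖ ≤ 1 / 2 := by rw [hzt]; exact ht2
        have h1 : ∀ᶠ n in atTop,
            ‖psiM (ρs n) (t : ℂ) - psiM (ρl : Measure Circle) (t : ℂ)‖ < ε / 3 * t ^ (K + 1) := by
          have h0 : Tendsto (fun n => psiM (ρs n) (t : ℂ) - psiM (ρl : Measure Circle) (t : ℂ))
              atTop (𝓝 0) := by
            simpa using (hpsi t ht0 ht2).sub_const (psiM (ρl : Measure Circle) (t : ℂ))
          exact (NormedAddCommGroup.tendsto_nhds_zero.mp h0) _ (by positivity)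
        have h2 : ∀ᶠ n in atTop, ∀ j ∈ Finset.range K,
            ‖(∫ x : Circle, (x : ℂ) ^ (j + 1) ∂(ρs n)) -
              ∫ x : Circle, (x : ℂ) ^ (j + 1) ∂(ρl : Measure Circle)‖ ≤
              ε / (3 * (K + 1)) * t ^ (K - j) := by
          rw [eventually_all_finset]
          intro j hj
          have hjK : j < K := Finset.mem_range.mp hj
          have h0 : Tendsto (fun n => (∫ x : Circle, (x : ℂ) ^ (j + 1) ∂(ρs n)) -
              ∫ x : Circle, (x : ℂ) ^ (j + 1) ∂(ρl : Measure Circle)) atTop (𝓝 0) := by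
            simpa using (IH (j + 1) (by omega)).sub_const
              (∫ x : Circle, (x : ℂ) ^ (j + 1) ∂(ρl : Measure Circle))
          exact ((NormedAddCommGroup.tendsto_nhds_zero.mp h0) _
            (by positivity)).mono fun n h => le_of_lt h
        filter_upwards [h1, h2] with n hn1 hn2
        have e1 := psi_partial (σ := ((ρs n : Measure Circle))) hz2 (K + 1)
        have e2 := psi_partial (σ := ((ρl : Measure Circle))) hz2 (K + 1)
        rw [hzt] at e1 e2
        have hS : (∑ j ∈ Finset.range (K + 1),
              ((∫ x : Circle, (x : ℂ) ^ (j + 1) ∂(ρs n)) -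
                ∫ x : Circle, (x : ℂ) ^ (j + 1) ∂(ρl : Measure Circle)) * ((t : ℝ) : ℂ) ^ (j + 1)) =
            (psiM (ρs n) (t : ℂ) - psiM (ρl : Measure Circle) (t : ℂ))
            - (psiM (ρs n) (t : ℂ) - ∑ j ∈ Finset.range (K + 1),
                (∫ x : Circle, (x : ℂ) ^ (j + 1) ∂(ρs n)) * ((t : ℝ) : ℂ) ^ (j + 1))
            + (psiM (ρl : Measure Circle) (t : ℂ) - ∑ j ∈ Finset.range (K + 1),
                (∫ x : Circle, (x : ℂ) ^ (j + 1) ∂(ρl : Measure Circle)) * ((t : ℝ) : ℂ) ^ (j + 1)) := by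
          simp only [sub_mul, Finset.sum_sub_distrib]
          ring
        have hnormS : ‖∑ j ∈ Finset.range (K + 1),
              ((∫ x : Circle, (x : ℂ) ^ (j + 1) ∂(ρs n)) -
                ∫ x : Circle, (x : ℂ) ^ (j + 1) ∂(ρl : Measure Circle)) * ((t : ℝ) : ℂ) ^ (j + 1)‖ <
            ε / 3 * t ^ (K + 1) + 2 * t ^ (K + 1 + 1) + 2 * t ^ (K + 1 + 1) := by
          rw [hS]
          have t1 := norm_add_le
            ((psiM (ρs n) (t : ℂ) - psiM (ρl : Measure Circle) (t : ℂ))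
            - (psiM (ρs n) (t : ℂ) - ∑ j ∈ Finset.range (K + 1),
                (∫ x : Circle, (x : ℂ) ^ (j + 1) ∂(ρs n)) * ((t : ℝ) : ℂ) ^ (j + 1)))
            (psiM (ρl : Measure Circle) (t : ℂ) - ∑ j ∈ Finset.range (K + 1),
                (∫ x : Circle, (x : ℂ) ^ (j + 1) ∂(ρl : Measure Circle)) * ((t : ℝ) : ℂ) ^ (j + 1))
          have t2 := norm_sub_le
            (psiM (ρs n) (t : ℂ) - psiM (ρl : Measure Circle) (t : ℂ))
            (psiM (ρs n) (t : ℂ) - ∑ j ∈ Finset.range (K + 1),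
                (∫ x : Circle, (x : ℂ) ^ (j + 1) ∂(ρs n)) * ((t : ℝ) : ℂ) ^ (j + 1))
          linarith
        have hsum_small : ‖∑ j ∈ Finset.range K,
              ((∫ x : Circle, (x : ℂ) ^ (j + 1) ∂(ρs n)) -
                ∫ x : Circle, (x : ℂ) ^ (j + 1) ∂(ρl : Measure Circle)) * ((t : ℝ) : ℂ) ^ (j + 1)‖ ≤
            (K : ℝ) * (ε / (3 * (K + 1)) * t ^ (K + 1)) := by
          calc ‖∑ j ∈ Finset.range K,
              ((∫ x : Circle, (x : ℂ) ^ (j + 1) ∂(ρs n)) -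
                ∫ x : Circle, (x : ℂ) ^ (j + 1) ∂(ρl : Measure Circle)) * ((t : ℝ) : ℂ) ^ (j + 1)‖
              ≤ ∑ j ∈ Finset.range K,
                ‖((∫ x : Circle, (x : ℂ) ^ (j + 1) ∂(ρs n)) -
                  ∫ x : Circle, (x : ℂ) ^ (j + 1) ∂(ρl : Measure Circle)) * ((t : ℝ) : ℂ) ^ (j + 1)‖ :=
              norm_sum_le _ _
            _ ≤ ∑ j ∈ Finset.range K, ε / (3 * (K + 1)) * t ^ (K + 1) := by
              apply Finset.sum_le_sum
              intro j hj
              have hjK : j < K := Finset.mem_range.mp hj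
              rw [norm_mul, norm_pow, hzt]
              have hb := hn2 j hj
              calc ‖(∫ x : Circle, (x : ℂ) ^ (j + 1) ∂(ρs n)) -
                    ∫ x : Circle, (x : ℂ) ^ (j + 1) ∂(ρl : Measure Circle)‖ * t ^ (j + 1)
                  ≤ (ε / (3 * (K + 1)) * t ^ (K - j)) * t ^ (j + 1) := by
                    apply mul_le_mul_of_nonneg_right hb (by positivity)
                _ = ε / (3 * (K + 1)) * t ^ (K + 1) := by
                    rw [mul_assoc, ← pow_add]
                    congr 2
                    omega
            _ = (K : ℝ) * (ε / (3 * (K + 1)) * t ^ (K + 1)) := by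
              rw [Finset.sum_const, Finset.card_range, nsmul_eq_mul]
        have hsplit : ((∫ x : Circle, (x : ℂ) ^ (K + 1) ∂(ρs n)) -
              ∫ x : Circle, (x : ℂ) ^ (K + 1) ∂(ρl : Measure Circle)) * ((t : ℝ) : ℂ) ^ (K + 1) =
            (∑ j ∈ Finset.range (K + 1),
              ((∫ x : Circle, (x : ℂ) ^ (j + 1) ∂(ρs n)) -
                ∫ x : Circle, (x : ℂ) ^ (j + 1) ∂(ρl : Measure Circle)) * ((t : ℝ) : ℂ) ^ (j + 1)) -
            ∑ j ∈ Finset.range K,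
              ((∫ x : Circle, (x : ℂ) ^ (j + 1) ∂(ρs n)) -
                ∫ x : Circle, (x : ℂ) ^ (j + 1) ∂(ρl : Measure Circle)) * ((t : ℝ) : ℂ) ^ (j + 1) := by
          rw [Finset.sum_range_succ]
          ring
        have hL : ‖((∫ x : Circle, (x : ℂ) ^ (K + 1) ∂(ρs n)) -
              ∫ x : Circle, (x : ℂ) ^ (K + 1) ∂(ρl : Measure Circle)) * ((t : ℝ) : ℂ) ^ (K + 1)‖ =
            ‖(∫ x : Circle, (x : ℂ) ^ (K + 1) ∂(ρs n)) -
              ∫ x : Circle, (x : ℂ) ^ (K + 1) ∂(ρl : Measure Circle)‖ * t ^ (K + 1) := by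
          rw [norm_mul, norm_pow, hzt]
        have h3 : ‖((∫ x : Circle, (x : ℂ) ^ (K + 1) ∂(ρs n)) -
              ∫ x : Circle, (x : ℂ) ^ (K + 1) ∂(ρl : Measure Circle)) * ((t : ℝ) : ℂ) ^ (K + 1)‖ ≤
            ‖∑ j ∈ Finset.range (K + 1),
              ((∫ x : Circle, (x : ℂ) ^ (j + 1) ∂(ρs n)) -
                ∫ x : Circle, (x : ℂ) ^ (j + 1) ∂(ρl : Measure Circle)) * ((t : ℝ) : ℂ) ^ (j + 1)‖ +
            ‖∑ j ∈ Finset.range K,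
              ((∫ x : Circle, (x : ℂ) ^ (j + 1) ∂(ρs n)) -
                ∫ x : Circle, (x : ℂ) ^ (j + 1) ∂(ρl : Measure Circle)) * ((t : ℝ) : ℂ) ^ (j + 1)‖ := by
          rw [hsplit]
          exact norm_sub_le _ _
        have hP : (0 : ℝ) < t ^ (K + 1) := by positivity
        have hKb : (K : ℝ) * (ε / (3 * ((K : ℝ) + 1)) * t ^ (K + 1)) ≤ ε / 3 * t ^ (K + 1) := by
          have hc : ε / 3 = ε / (3 * ((K : ℝ) + 1)) * ((K : ℝ) + 1) := by
            field_simp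
          rw [hc]
          have hc0 : (0 : ℝ) ≤ ε / (3 * ((K : ℝ) + 1)) := by positivity
          nlinarith [hP.le, hc0]
        have h4t : 2 * t ^ (K + 1 + 1) + 2 * t ^ (K + 1 + 1) ≤ ε / 3 * t ^ (K + 1) := by
          have e : t ^ (K + 1 + 1) = t * t ^ (K + 1) := by ring
          rw [e]
          nlinarith [hP, htε, hε]
        have htot : ‖(∫ x : Circle, (x : ℂ) ^ (K + 1) ∂(ρs n)) -
              ∫ x : Circle, (x : ℂ) ^ (K + 1) ∂(ρl : Measure Circle)‖ * t ^ (K + 1) <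
            ε * t ^ (K + 1) := by
          rw [← hL]
          calc ‖((∫ x : Circle, (x : ℂ) ^ (K + 1) ∂(ρs n)) -
                ∫ x : Circle, (x : ℂ) ^ (K + 1) ∂(ρl : Measure Circle)) * ((t : ℝ) : ℂ) ^ (K + 1)‖
              ≤ _ + _ := h3
            _ < (ε / 3 * t ^ (K + 1) + 2 * t ^ (K + 1 + 1) + 2 * t ^ (K + 1 + 1)) +
                (K : ℝ) * (ε / (3 * (K + 1)) * t ^ (K + 1)) := by
              exact add_lt_add_of_lt_of_le hnormS hsum_small
            _ ≤ ε * t ^ (K + 1) := by linarith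
        exact (mul_lt_mul_iff_left₀ hP).mp htot
      have := main.add (tendsto_const_nhds
        (x := ∫ x : Circle, (x : ℂ) ^ (K + 1) ∂(ρl : Measure Circle)) (f := atTop))
      simpa using this

noncomputable def chi (k : ℤ) : ContinuousMap Circle ℂ :=
  ⟨fun x => ((x ^ k : Circle) : ℂ), continuous_coe.comp (continuous_zpow k)⟩

lemma chi_apply (k : ℤ) (x : Circle) : chi k x = ((x ^ k : Circle) : ℂ) := rfl

lemma chi_add (k j : ℤ) : chi (k + j) = chi k * chi j := by
  ext x
  simp [chi_apply, zpow_add]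

lemma chi_zero_eq : chi 0 = 1 := by
  ext x
  simp [chi_apply]

lemma chi_neg (k : ℤ) : chi (-k) = star (chi k) := by
  ext x
  simp only [chi_apply, ContinuousMap.star_apply, zpow_neg, Circle.coe_inv_eq_conj]
  rfl

lemma chi_coe_pow (K : ℕ) (x : Circle) : chi (K : ℤ) x = (x : ℂ) ^ K := by
  rw [chi_apply, zpow_natCast]
  exact map_pow Circle.coeHom x K

/-- The span of the characters. -/
noncomputable abbrev charSpan : Submodule ℂ (ContinuousMap Circle ℂ) :=
  Submodule.span ℂ (Set.range chi)

lemma charSpan_mul_mem {a b : ContinuousMap Circle ℂ} (ha : a ∈ charSpan) (hb : b ∈ charSpan) :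
    a * b ∈ charSpan := by
  induction ha using Submodule.span_induction with
  | mem f hf =>
    induction hb using Submodule.span_induction with
    | mem g hg =>
      obtain ⟨k, rfl⟩ := hf
      obtain ⟨j, rfl⟩ := hg
      exact Submodule.subset_span ⟨k + j, chi_add k j⟩
    | zero => rw [mul_zero]; exact Submodule.zero_mem _
    | add x y hx hy ihx ihy => rw [mul_add]; exact Submodule.add_mem _ ihx ihy
    | smul c x hx ihx => rw [mul_smul_comm]; exact Submodule.smul_mem _ _ ihx
  | zero => rw [zero_mul]; exact Submodule.zero_mem _
  | add x y hx hy ihx ihy => rw [add_mul]; exact Submodule.add_mem _ ihx ihy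
  | smul c x hx ihx => rw [smul_mul_assoc]; exact Submodule.smul_mem _ _ ihx

lemma charSpan_star_mem {a : ContinuousMap Circle ℂ} (ha : a ∈ charSpan) : star a ∈ charSpan := by
  induction ha using Submodule.span_induction with
  | mem f hf =>
    obtain ⟨k, rfl⟩ := hf
    rw [← chi_neg]
    exact Submodule.subset_span ⟨-k, rfl⟩
  | zero => rw [star_zero]; exact Submodule.zero_mem _
  | add x y hx hy ihx ihy => rw [star_add]; exact Submodule.add_mem _ ihx ihy
  | smul c x hx ihx => rw [star_smul]; exact Submodule.smul_mem _ _ ihx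

lemma adjoin_subset_charSpan {g : ContinuousMap Circle ℂ}
    (hg : g ∈ StarAlgebra.adjoin ℂ ({chi 1} : Set (ContinuousMap Circle ℂ))) :
    g ∈ charSpan := by
  induction hg using StarAlgebra.adjoin_induction with
  | mem x hx =>
    rw [Set.mem_singleton_iff] at hx
    subst hx
    exact Submodule.subset_span ⟨1, rfl⟩
  | algebraMap r =>
    have h : algebraMap ℂ (ContinuousMap Circle ℂ) r = r • chi 0 := by
      rw [chi_zero_eq, Algebra.algebraMap_eq_smul_one]
    rw [h]
    exact Submodule.smul_mem _ _ (Submodule.subset_span ⟨0, rfl⟩)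
  | add x y hx hy ihx ihy => exact Submodule.add_mem _ ihx ihy
  | mul x y hx hy ihx ihy => exact charSpan_mul_mem ihx ihy
  | star x hx ihx => exact charSpan_star_mem ihx

lemma sep : (StarAlgebra.adjoin ℂ ({chi 1} : Set (ContinuousMap Circle ℂ))).SeparatesPoints := by
  intro x y hxy
  refine ⟨_, ⟨chi 1, ?_, rfl⟩, ?_⟩
  · exact StarAlgebra.self_mem_adjoin_singleton ℂ _
  · intro h
    apply hxy
    apply Circle.coe_injective
    simpa [chi_apply] using h

end MCAux

/-- The monotone convolution is weakly continuous: if `μₙ → μ` and `νₙ → ν` weakly,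
then `μₙ ▷ νₙ → μ ▷ ν` weakly (convolutions being characterized by
`K_{μ ▷ ν} = K_μ ∘ K_ν` on the open unit disc). -/
theorem monotone_convolution_weakly_continuous
    (μn νn ρn : ℕ → ProbabilityMeasure Circle)
    (μ ν ρ : ProbabilityMeasure Circle)
    (hμ : Tendsto μn atTop (nhds μ)) (hν : Tendsto νn atTop (nhds ν))
    (hKρn : ∀ n, ∀ z ∈ ball (0 : ℂ) 1,
      Km (ρn n : Measure Circle) z = Km (μn n : Measure Circle) (Km (νn n : Measure Circle) z))
    (hKρ : ∀ z ∈ ball (0 : ℂ) 1,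
      Km (ρ : Measure Circle) z = Km (μ : Measure Circle) (Km (ν : Measure Circle) z)) :
    Tendsto ρn atTop (nhds ρ) := by
  -- Step 1: pointwise convergence of `ψ_{ρₙ}` on the open unit disc.
  have hψρ : ∀ z : ℂ, ‖z‖ < 1 →
      Tendsto (fun n => psiM (ρn n) z) atTop (𝓝 (psiM (ρ : Measure Circle) z)) := by
    intro z hz
    have hzball : z ∈ ball (0 : ℂ) 1 := by simpa [mem_ball, dist_zero_right] using hz
    have hψν := MCAux.psi_tendsto hν hz
    have hνne := MCAux.one_add_psi_ne (σ := (ν : Measure Circle)) hz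
    have hKν : Tendsto (fun n => Km (νn n) z) atTop (𝓝 (Km (ν : Measure Circle) z)) := by
      simp only [Km]
      exact hψν.div (tendsto_const_nhds.add hψν) hνne
    have hw : ‖Km (ν : Measure Circle) z‖ < 1 := MCAux.norm_Km_lt hz
    set w := Km (ν : Measure Circle) z with hwdef
    set r : ℝ := (1 + ‖w‖) / 2 with hrdef
    have hr1 : r < 1 := by rw [hrdef]; linarith
    have hwr : ‖w‖ ≤ r := by rw [hrdef]; linarith
    have hw1 : ‖w‖ < 1 := hw
    have hevr : ∀ᶠ n in atTop, ‖Km (νn n) z‖ ≤ r := by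
      have hn := hKν.norm
      have h' : ∀ᶠ n in atTop, ‖Km (νn n) z‖ < r :=
        hn.eventually_lt_const (by rw [hrdef]; linarith)
      exact h'.mono fun n h => le_of_lt h
    have hψμw : Tendsto (fun n => psiM (μn n) (Km (νn n) z)) atTop
        (𝓝 (psiM (μ : Measure Circle) w)) := by
      rw [tendsto_iff_norm_sub_tendsto_zero]
      have t1 : Tendsto (fun n => ‖Km (νn n) z - w‖ / (1 - r) ^ 2) atTop (𝓝 0) := by
        have h' := ((hKν.sub_const w).norm).div_const ((1 - r) ^ 2)
        simpa using h'
      have t2 : Tendsto (fun n => ‖psiM (μn n) w - psiM (μ : Measure Circle) w‖) atTop (𝓝 0) := by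
        have h' := MCAux.psi_tendsto hμ hw1
        rwa [tendsto_iff_norm_sub_tendsto_zero] at h'
      have hb1 : Tendsto (fun n => ‖Km (νn n) z - w‖ / (1 - r) ^ 2 +
          ‖psiM (μn n) w - psiM (μ : Measure Circle) w‖) atTop (𝓝 0) := by
        simpa using t1.add t2
      apply squeeze_zero' (Filter.Eventually.of_forall fun n => norm_nonneg _) ?_ hb1
      filter_upwards [hevr] with n hn
      have htri : ‖psiM (μn n) (Km (νn n) z) - psiM (μ : Measure Circle) w‖ ≤
          ‖psiM (μn n) (Km (νn n) z) - psiM (μn n) w‖ +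
            ‖psiM (μn n) w - psiM (μ : Measure Circle) w‖ := by
        have h3 := dist_triangle (psiM (μn n) (Km (νn n) z)) (psiM (μn n) w)
          (psiM (μ : Measure Circle) w)
        simpa [dist_eq_norm] using h3
      have hlip : ‖psiM (μn n) (Km (νn n) z) - psiM (μn n) w‖ ≤
          ‖Km (νn n) z - w‖ / (1 - r) ^ 2 :=
        MCAux.psi_lip hr1 hn hwr
      linarith
    have hμne := MCAux.one_add_psi_ne (σ := (μ : Measure Circle)) hw1
    have hKμ : Tendsto (fun n => Km (μn n) (Km (νn n) z)) atTop
        (𝓝 (Km (μ : Measure Circle) w)) := by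
      simp only [Km]
      exact hψμw.div (tendsto_const_nhds.add hψμw) hμne
    have hKρt : Tendsto (fun n => Km (ρn n) z) atTop (𝓝 (Km (ρ : Measure Circle) z)) := by
      rw [hKρ z hzball]
      have he : (fun n => Km (ρn n) z) = fun n => Km (μn n) (Km (νn n) z) :=
        funext fun n => hKρn n z hzball
      rw [he]
      exact hKμ
    rw [MCAux.psi_eq_Km (σ := (ρ : Measure Circle)) hz]
    have he2 : (fun n => psiM (ρn n) z) = fun n => Km (ρn n) z / (1 - Km (ρn n) z) :=
      funext fun n => MCAux.psi_eq_Km hz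
    rw [he2]
    exact hKρt.div (tendsto_const_nhds.sub hKρt) (MCAux.one_sub_Km_ne hz)
  -- Step 2: convergence of moments.
  have hmom := MCAux.mom_tendsto (ρs := ρn) (ρl := ρ) (fun t ht0 ht2 => hψρ t (by
    rw [Complex.norm_real, Real.norm_eq_abs, abs_of_pos ht0]; linarith))
  -- Step 3: convergence of integrals of all characters.
  have hchi : ∀ k : ℤ, Tendsto (fun n => ∫ x : Circle, MCAux.chi k x ∂(ρn n)) atTop
      (𝓝 (∫ x : Circle, MCAux.chi k x ∂(ρ : Measure Circle))) := by
    intro k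
    rcases k with K | K
    · have he : ∀ σ : Measure Circle,
          ∫ x : Circle, MCAux.chi (Int.ofNat K) x ∂σ = ∫ x : Circle, (x : ℂ) ^ K ∂σ := by
        intro σ
        have hfe : (fun x : Circle => MCAux.chi (Int.ofNat K) x) =
            fun x : Circle => (x : ℂ) ^ K := funext fun x => MCAux.chi_coe_pow K x
        rw [hfe]
      simp only [he]
      exact hmom K
    · have he : ∀ σ : Measure Circle,
          ∫ x : Circle, MCAux.chi (Int.negSucc K) x ∂σ =
            (starRingEnd ℂ) (∫ x : Circle, (x : ℂ) ^ (K + 1) ∂σ) := by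
        intro σ
        rw [← integral_conj]
        have hfe : (fun x : Circle => MCAux.chi (Int.negSucc K) x) =
            fun x : Circle => (starRingEnd ℂ) ((x : ℂ) ^ (K + 1)) := by
          funext x
          have hns : (Int.negSucc K) = -((K + 1 : ℕ) : ℤ) := by
            simp [Int.negSucc_eq]
          rw [hns, MCAux.chi_neg]
          simp only [ContinuousMap.star_apply, MCAux.chi_coe_pow]
          rfl
        rw [hfe]
      simp only [he]
      exact (Complex.continuous_conj.tendsto _).comp (hmom (K + 1))
  -- Step 4: convergence of integrals over the span of characters.
  have hspan : ∀ g ∈ MCAux.charSpan, Tendsto (fun n => ∫ x : Circle, g x ∂(ρn n)) atTop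
      (𝓝 (∫ x : Circle, g x ∂(ρ : Measure Circle))) := by
    intro g hg
    induction hg using Submodule.span_induction with
    | mem f hf =>
      obtain ⟨k, rfl⟩ := hf
      exact hchi k
    | zero => simp
    | add a b ha hb iha ihb =>
      have e : ∀ (σ : Measure Circle) [IsFiniteMeasure σ], ∫ x : Circle, (a + b) x ∂σ =
          (∫ x : Circle, a x ∂σ) + ∫ x : Circle, b x ∂σ := by
        intro σ _
        simp only [ContinuousMap.add_apply]
        exact integral_add (MCAux.integrable_cont a.continuous) (MCAux.integrable_cont b.continuous)
      have e1 : (fun n => ∫ x : Circle, (a + b) x ∂(ρn n)) =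
          fun n => (∫ x : Circle, a x ∂(ρn n)) + ∫ x : Circle, b x ∂(ρn n) :=
        funext fun n => e _
      rw [e1, e (ρ : Measure Circle)]
      exact iha.add ihb
    | smul c a ha iha =>
      have e : ∀ σ : Measure Circle, ∫ x : Circle, (c • a) x ∂σ = c • ∫ x : Circle, a x ∂σ := by
        intro σ
        simp only [ContinuousMap.smul_apply]
        exact integral_smul c _
      have e1 : (fun n => ∫ x : Circle, (c • a) x ∂(ρn n)) =
          fun n => c • ∫ x : Circle, a x ∂(ρn n) :=
        funext fun n => e _
      rw [e1, e (ρ : Measure Circle)]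
      exact iha.const_smul c
  -- Step 5: convergence of integrals of all continuous complex functions (Stone-Weierstrass).
  have hallC : ∀ g : ContinuousMap Circle ℂ, Tendsto (fun n => ∫ x : Circle, g x ∂(ρn n)) atTop
      (𝓝 (∫ x : Circle, g x ∂(ρ : Measure Circle))) := by
    intro g
    rw [Metric.tendsto_nhds]
    intro ε hε
    have hdense := ContinuousMap.starSubalgebra_topologicalClosure_eq_top_of_separatesPoints
      (StarAlgebra.adjoin ℂ ({MCAux.chi 1} : Set (ContinuousMap Circle ℂ))) MCAux.sep
    have hgmem : g ∈ closure ((StarAlgebra.adjoin ℂ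
        ({MCAux.chi 1} : Set (ContinuousMap Circle ℂ))) : Set (ContinuousMap Circle ℂ)) := by
      have h' : g ∈ (StarAlgebra.adjoin ℂ
          ({MCAux.chi 1} : Set (ContinuousMap Circle ℂ))).topologicalClosure := by
        rw [hdense]
        trivial
      exact h'
    obtain ⟨g', hg'mem, hg'close⟩ := Metric.mem_closure_iff.mp hgmem (ε / 3) (by linarith)
    have htd := hspan g' (MCAux.adjoin_subset_charSpan hg'mem)
    have hev : ∀ᶠ n in atTop, dist (∫ x : Circle, g' x ∂(ρn n))
        (∫ x : Circle, g' x ∂(ρ : Measure Circle)) < ε / 3 := by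
      rw [Metric.tendsto_nhds] at htd
      exact htd _ (by linarith)
    have hbnd : ∀ (σ : Measure Circle) [IsProbabilityMeasure σ],
        dist (∫ x : Circle, g x ∂σ) (∫ x : Circle, g' x ∂σ) ≤ dist g g' := by
      intro σ _
      rw [dist_eq_norm, ← integral_sub (MCAux.integrable_cont g.continuous)
        (MCAux.integrable_cont g'.continuous)]
      calc ‖∫ x : Circle, (g x - g' x) ∂σ‖ ≤ dist g g' * (σ Set.univ).toReal :=
            norm_integral_le_of_norm_le_const (ae_of_all _ fun x => by
              rw [← dist_eq_norm]
              exact ContinuousMap.dist_apply_le_dist x)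
        _ = dist g g' := by simp
    filter_upwards [hev] with n hn
    have b1 := hbnd (ρn n)
    have b3 := hbnd (ρ : Measure Circle)
    have tri := dist_triangle4 (∫ x : Circle, g x ∂(ρn n)) (∫ x : Circle, g' x ∂(ρn n))
      (∫ x : Circle, g' x ∂(ρ : Measure Circle)) (∫ x : Circle, g x ∂(ρ : Measure Circle))
    have b3' : dist (∫ x : Circle, g' x ∂(ρ : Measure Circle))
        (∫ x : Circle, g x ∂(ρ : Measure Circle)) ≤ dist g g' := by
      rw [dist_comm]
      exact b3
    calc dist (∫ x : Circle, g x ∂(ρn n)) (∫ x : Circle, g x ∂(ρ : Measure Circle)) ≤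
          dist (∫ x : Circle, g x ∂(ρn n)) (∫ x : Circle, g' x ∂(ρn n)) +
          dist (∫ x : Circle, g' x ∂(ρn n)) (∫ x : Circle, g' x ∂(ρ : Measure Circle)) +
          dist (∫ x : Circle, g' x ∂(ρ : Measure Circle))
            (∫ x : Circle, g x ∂(ρ : Measure Circle)) := tri
      _ < ε := by linarith [hg'close]
  -- Step 6: conclude weak convergence.
  rw [MeasureTheory.ProbabilityMeasure.tendsto_iff_forall_integral_tendsto]
  intro f
  have hg := hallC ⟨fun x => ((f x : ℝ) : ℂ), Complex.continuous_ofReal.comp f.continuous⟩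
  simp only [ContinuousMap.coe_mk] at hg
  have he : ∀ σ : Measure Circle, ∫ x : Circle, ((f x : ℝ) : ℂ) ∂σ =
      ((∫ x : Circle, f x ∂σ : ℝ) : ℂ) := fun σ => integral_ofReal
  have h2 : Tendsto (fun n => ((∫ x : Circle, f x ∂(ρn n) : ℝ) : ℂ)) atTop
      (𝓝 ((∫ x : Circle, f x ∂(ρ : Measure Circle) : ℝ) : ℂ)) := by
    have e1 : (fun n => ((∫ x : Circle, f x ∂(ρn n) : ℝ) : ℂ)) =
        fun n => ∫ x : Circle, ((f x : ℝ) : ℂ) ∂(ρn n) := funext fun n => (he _).symm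
    rw [e1, ← he (ρ : Measure Circle)]
    exact hg
  have h3 := (Complex.continuous_re.tendsto _).comp h2
  simpa [Function.comp_def] using h3
end

section
/- Let (K_t)_{t≥0} be a continuous composition semigroup of K-transforms. Then there exists a holomorphic function u : 𝔻 → ℂ with Re u(z) ≥ 0 for all z ∈ 𝔻 such that for every z ∈ 𝔻 the map t ↦ K_t(z) is differentiable on [0,∞) and satisfies d/dt K_t(z) = −K_t(z)·u(K_t(z)) for all t ≥ 0, with K_0(z) = z. -/
open Metric Set

open intervalIntegral MeasureTheory Filter Complex Topology

namespace KgenAux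

variable {K : ℝ → ℂ → ℂ}

/-- If a real function on `[0,∞)` has a right derivative at `0` and attains its max at `0`,
the right derivative is nonpositive. -/
lemma right_deriv_nonpos {q : ℝ → ℝ} {d : ℝ}
    (h : HasDerivWithinAt q d (Ici 0) 0) (hle : ∀ s ≥ (0:ℝ), q s ≤ q 0) : d ≤ 0 := by
  rw [hasDerivWithinAt_iff_tendsto_slope] at h
  rw [Set.Ici_sdiff_left] at h
  refine le_of_tendsto h ?_
  filter_upwards [eventually_mem_nhdsWithin] with s (hs : s ∈ Ioi (0:ℝ))
  rw [slope_def_field]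
  have h1 : q s - q 0 ≤ 0 := sub_nonpos.2 (hle s (le_of_lt hs))
  have h2 : (0:ℝ) < s - 0 := by simpa using hs
  exact div_nonpos_iff.2 (Or.inr ⟨h1, h2.le⟩)

lemma timeCont
    (hcont : ∀ t₀ ≥ (0 : ℝ),
      TendstoLocallyUniformlyOn K (K t₀) (nhdsWithin t₀ (Ici 0)) (ball (0 : ℂ) 1))
    {z : ℂ} (hz : z ∈ ball (0:ℂ) 1) : ContinuousOn (fun s => K s z) (Ici (0:ℝ)) := by
  intro t ht
  exact (hcont t ht).tendsto_at hz

lemma derivCont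
    (hdiff : ∀ t ≥ (0 : ℝ), DifferentiableOn ℂ (K t) (ball (0 : ℂ) 1))
    (hcont : ∀ t₀ ≥ (0 : ℝ),
      TendstoLocallyUniformlyOn K (K t₀) (nhdsWithin t₀ (Ici 0)) (ball (0 : ℂ) 1))
    {w : ℂ} (hw : w ∈ ball (0:ℂ) 1) :
    ContinuousOn (fun s => deriv (K s) w) (Ici (0:ℝ)) := by
  intro t ht
  have hev : ∀ᶠ s in 𝓝[Ici (0:ℝ)] t, DifferentiableOn ℂ (K s) (ball (0:ℂ) 1) :=
    eventually_mem_nhdsWithin.mono fun s hs => hdiff s hs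
  exact ((hcont t ht).deriv hev isOpen_ball).tendsto_at hw

lemma derivAtZero (hid : ∀ z ∈ ball (0:ℂ) 1, K 0 z = z)
    {w : ℂ} (hw : w ∈ ball (0:ℂ) 1) : deriv (K 0) w = 1 := by
  have h : K 0 =ᶠ[nhds w] id := by
    filter_upwards [isOpen_ball.mem_nhds hw] with x hx using hid x hx
  rw [h.deriv_eq]
  exact deriv_id w

lemma integral_ne_zero {g : ℝ → ℂ} {t₀ : ℝ} (ht₀ : 0 < t₀)
    (hc : ContinuousOn g (Ici 0))
    (hb : ∀ s ∈ Icc (0:ℝ) t₀, ‖g s - 1‖ ≤ 1/2) :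
    (∫ s in (0:ℝ)..t₀, g s) ≠ 0 := by
  have hIcc : uIcc (0:ℝ) t₀ = Icc 0 t₀ := uIcc_of_le ht₀.le
  have hci : ContinuousOn g (uIcc (0:ℝ) t₀) := hc.mono (by rw [hIcc]; exact Icc_subset_Ici_self)
  have hint : IntervalIntegrable g volume 0 t₀ := hci.intervalIntegrable
  have hint1 : IntervalIntegrable (fun _ : ℝ => (1:ℂ)) volume 0 t₀ := intervalIntegrable_const
  have hsub : (∫ s in (0:ℝ)..t₀, g s) - (t₀ : ℂ) = ∫ s in (0:ℝ)..t₀, (g s - 1) := by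
    rw [intervalIntegral.integral_sub hint hint1]
    simp
  have hbound : ‖∫ s in (0:ℝ)..t₀, (g s - 1)‖ ≤ (1/2) * |t₀ - 0| := by
    apply intervalIntegral.norm_integral_le_of_norm_le_const
    intro x hx
    rw [uIoc_of_le ht₀.le] at hx
    exact hb x ⟨hx.1.le, hx.2⟩
  intro h0
  rw [h0, zero_sub] at hsub
  rw [← hsub, norm_neg] at hbound
  have h2 : ‖(t₀:ℂ)‖ = t₀ := by
    rw [Complex.norm_real]; exact Real.norm_of_nonneg ht₀.le
  rw [h2, sub_zero, abs_of_pos ht₀] at hbound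
  linarith

lemma ball_sub (w₀ : ℂ) (hw : w₀ ∈ ball (0:ℂ) 1) {x : ℂ}
    (hx : x ∈ ball w₀ ((1 - ‖w₀‖)/3)) : ball x ((1 - ‖w₀‖)/3) ⊆ ball (0:ℂ) 1 := by
  intro y hy
  rw [mem_ball_zero_iff] at hw ⊢
  rw [mem_ball, dist_eq_norm] at hx hy
  calc ‖y‖ = ‖(y - x) + (x - w₀) + w₀‖ := by ring_nf
    _ ≤ ‖(y - x) + (x - w₀)‖ + ‖w₀‖ := norm_add_le _ _
    _ ≤ ‖y - x‖ + ‖x - w₀‖ + ‖w₀‖ := by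
        have := norm_add_le (y - x) (x - w₀); linarith
    _ < (1 - ‖w₀‖)/3 + (1 - ‖w₀‖)/3 + ‖w₀‖ := by linarith
    _ ≤ 1 := by
        have h1 : 0 ≤ ‖y - x‖ := norm_nonneg _
        have h2 : 0 ≤ ‖x - w₀‖ := norm_nonneg _
        have : 0 < (1 - ‖w₀‖)/3 := by
          by_contra hcon
          push_neg at hcon
          linarith
        linarith

lemma integralHasDerivAt
    (hdiff : ∀ t ≥ (0 : ℝ), DifferentiableOn ℂ (K t) (ball (0 : ℂ) 1))
    (hmaps : ∀ t ≥ (0 : ℝ), MapsTo (K t) (ball (0 : ℂ) 1) (ball (0 : ℂ) 1))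
    (hcont : ∀ t₀ ≥ (0 : ℝ),
      TendstoLocallyUniformlyOn K (K t₀) (nhdsWithin t₀ (Ici 0)) (ball (0 : ℂ) 1))
    {t₀ : ℝ} (ht₀ : 0 < t₀) {w₀ : ℂ} (hw : w₀ ∈ ball (0:ℂ) 1) :
    HasDerivAt (fun x => ∫ s in (0:ℝ)..t₀, K s x)
      (∫ s in (0:ℝ)..t₀, deriv (K s) w₀) w₀ := by
  set ε := (1 - ‖w₀‖)/3 with hε
  have hw1 : ‖w₀‖ < 1 := mem_ball_zero_iff.1 hw
  have hεpos : 0 < ε := by rw [hε]; linarith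
  have hIocIci : Set.uIoc (0:ℝ) t₀ ⊆ Ici (0:ℝ) := by
    rw [uIoc_of_le ht₀.le]; exact fun x hx => hx.1.le
  have hballmem : ∀ x ∈ ball w₀ ε, x ∈ ball (0:ℂ) 1 := fun x hx =>
    ball_sub w₀ hw hx (mem_ball_self hεpos)
  have key := intervalIntegral.hasDerivAt_integral_of_dominated_loc_of_deriv_le
    (F := fun x s => K s x) (F' := fun x s => deriv (K s) x) (x₀ := w₀)
    (a := 0) (b := t₀) (μ := volume) (bound := fun _ => 2/ε) (s := ball w₀ ε) (ball_mem_nhds w₀ hεpos) ?_ ?_ ?_ ?_ ?_ ?_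
  · exact key.2
  · filter_upwards [isOpen_ball.mem_nhds hw] with x hx
    exact ((timeCont hcont hx).mono hIocIci).aestronglyMeasurable measurableSet_uIoc
  · exact ((timeCont hcont hw).mono (by rw [uIcc_of_le ht₀.le]; exact Icc_subset_Ici_self)).intervalIntegrable
  · exact ((derivCont hdiff hcont hw).mono hIocIci).aestronglyMeasurable measurableSet_uIoc
  · apply MeasureTheory.ae_of_all
    intro s hs x hx
    have hs0 : (0:ℝ) ≤ s := hIocIci hs
    have hxball : ball x ε ⊆ ball (0:ℂ) 1 := ball_sub w₀ hw hx
    have hmapsx : MapsTo (K s) (ball x ε) (ball (K s x) 2) := by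
      intro y hy
      have h1 := hmaps s hs0 (hxball hy)
      have h2 := hmaps s hs0 (hballmem x hx)
      rw [mem_ball_zero_iff] at h1 h2
      rw [mem_ball, dist_eq_norm]
      calc ‖K s y - K s x‖ ≤ ‖K s y‖ + ‖K s x‖ := norm_sub_le _ _
        _ < 2 := by linarith
    exact Complex.norm_deriv_le_div_of_mapsTo_ball
      ((hdiff s hs0).mono hxball) (hmapsx.mono_right ball_subset_closedBall) hεpos
  · exact intervalIntegrable_const
  · apply MeasureTheory.ae_of_all
    intro s hs x hx
    have hs0 : (0:ℝ) ≤ s := hIocIci hs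
    exact ((hdiff s hs0).differentiableAt
      (isOpen_ball.mem_nhds (hballmem x hx))).hasDerivAt

lemma smallness
    (hdiff : ∀ t ≥ (0 : ℝ), DifferentiableOn ℂ (K t) (ball (0 : ℂ) 1))
    (hid : ∀ z ∈ ball (0:ℂ) 1, K 0 z = z)
    (hcont : ∀ t₀ ≥ (0 : ℝ),
      TendstoLocallyUniformlyOn K (K t₀) (nhdsWithin t₀ (Ici 0)) (ball (0 : ℂ) 1))
    {z₀ : ℂ} (hz₀ : z₀ ∈ ball (0:ℂ) 1) :
    ∃ ρ > 0, closedBall z₀ ρ ⊆ ball (0:ℂ) 1 ∧ ∃ t₀ > 0,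
      ∀ s ∈ Icc (0:ℝ) t₀, ∀ x ∈ closedBall z₀ ρ, ‖deriv (K s) x - 1‖ ≤ 1/2 := by
  obtain ⟨ρ, hρpos, hρsub⟩ := nhds_basis_closedBall.mem_iff.1 (isOpen_ball.mem_nhds hz₀)
  refine ⟨ρ, hρpos, hρsub, ?_⟩
  have hev : ∀ᶠ s in 𝓝[Ici (0:ℝ)] 0, DifferentiableOn ℂ (K s) (ball (0:ℂ) 1) :=
    eventually_mem_nhdsWithin.mono fun s hs => hdiff s hs
  have htlu := (hcont 0 le_rfl).deriv hev isOpen_ball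
  have htu := (tendstoLocallyUniformlyOn_iff_forall_isCompact isOpen_ball).1 htlu
    (closedBall z₀ ρ) hρsub (isCompact_closedBall z₀ ρ)
  have hev2 := Metric.tendstoUniformlyOn_iff.1 htu (1/2) (by norm_num)
  obtain ⟨δ, hδpos, hδ⟩ := Metric.mem_nhdsWithin_iff.1 hev2
  refine ⟨δ/2, by linarith, ?_⟩
  intro s hsmem x hx
  have hsball : s ∈ Metric.ball (0:ℝ) δ ∩ Ici 0 := by
    constructor
    · rw [mem_ball, dist_eq_norm, sub_zero, Real.norm_of_nonneg hsmem.1]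
      linarith [hsmem.2]
    · exact hsmem.1
  have := hδ hsball x hx
  rw [Function.comp_apply] at this
  have hK0 : deriv (K 0) x = 1 := derivAtZero hid (hρsub hx)
  rw [hK0] at this
  rw [dist_comm, dist_eq_norm] at this
  exact this.le

lemma key
    (hdiff : ∀ t ≥ (0 : ℝ), DifferentiableOn ℂ (K t) (ball (0 : ℂ) 1))
    (hmaps : ∀ t ≥ (0 : ℝ), MapsTo (K t) (ball (0 : ℂ) 1) (ball (0 : ℂ) 1))
    (hsg : ∀ s ≥ (0 : ℝ), ∀ t ≥ (0 : ℝ), ∀ z ∈ ball (0 : ℂ) 1, K (s + t) z = K s (K t z))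
    (hcont : ∀ t₀ ≥ (0 : ℝ),
      TendstoLocallyUniformlyOn K (K t₀) (nhdsWithin t₀ (Ici 0)) (ball (0 : ℂ) 1))
    {z : ℂ} (hz : z ∈ ball (0:ℂ) 1) {t : ℝ} (ht : 0 ≤ t) {t₀ : ℝ} (ht₀ : 0 < t₀)
    (hb : ∀ s ∈ Icc (0:ℝ) t₀, ‖deriv (K s) (K t z) - 1‖ ≤ 1/2) :
    HasDerivWithinAt (fun s => K s z)
      ((∫ s in (0:ℝ)..t₀, deriv (K s) (K t z))⁻¹ * (K (t + t₀) z - K t z)) (Ici 0) t := by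
  set w := K t z with hwdef
  have hw : w ∈ ball (0:ℂ) 1 := hmaps t ht hz
  set H : ℂ → ℂ := fun x => ∫ s in (0:ℝ)..t₀, K s x with hHdef
  set D : ℂ := ∫ s in (0:ℝ)..t₀, deriv (K s) w with hDdef
  have hH : ∀ x ∈ ball (0:ℂ) 1,
      HasDerivAt H (∫ s in (0:ℝ)..t₀, deriv (K s) x) x := fun x hx =>
    integralHasDerivAt hdiff hmaps hcont ht₀ hx
  have hD_ne : D ≠ 0 := integral_ne_zero ht₀ (derivCont hdiff hcont hw) hb
  have hHdiffOn : DifferentiableOn ℂ H (ball (0:ℂ) 1) := fun x hx =>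
    ((hH x hx).differentiableAt).differentiableWithinAt
  obtain ⟨p, hp⟩ := hHdiffOn.analyticAt (isOpen_ball.mem_nhds hw)
  have hcoeff : p.coeff 1 = D := hp.deriv.symm.trans ((hH w hw).deriv)
  have hstrict : HasStrictDerivAt H D w := hcoeff ▸ hp.hasStrictDerivAt
  set g : ℂ → ℂ := hstrict.localInverse H D w hD_ne with hgdef
  have hg_strict : HasStrictDerivAt g D⁻¹ (H w) :=
    HasStrictDerivAt.to_localInverse hstrict hD_ne
  have hg_left : ∀ᶠ x in nhds w, g (H x) = x :=
    (hstrict.hasStrictFDerivAt_equiv hD_ne).eventually_left_inverse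
  -- the time-side function
  set f : ℝ → ℂ := fun s => K (max s 0) z with hfdef
  have hfc : Continuous f :=
    (timeCont hcont hz).comp_continuous (continuous_id.max continuous_const)
      (fun s => mem_Ici.2 (le_max_right _ _))
  set ψ : ℝ → ℂ := fun τ => ∫ s in (0:ℝ)..τ, f s with hψdef
  have hψ : ∀ τ, HasDerivAt ψ (f τ) τ := fun τ =>
    (hfc.integral_hasStrictDerivAt 0 τ).hasDerivAt
  have hfval : ∀ s, 0 ≤ s → f s = K s z := by
    intro s hs
    simp only [hfdef, max_eq_left hs]
  have hIdent : ∀ s, 0 ≤ s → H (K s z) = ψ (s + t₀) - ψ s := by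
    intro s hs
    have hKs : K s z ∈ ball (0:ℂ) 1 := hmaps s hs hz
    have h1 : H (K s z) = ∫ σ in (0:ℝ)..t₀, f (σ + s) := by
      apply intervalIntegral.integral_congr
      intro σ hσ
      rw [uIcc_of_le ht₀.le] at hσ
      have hσ0 : (0:ℝ) ≤ σ := hσ.1
      show K σ (K s z) = f (σ + s)
      rw [hfval (σ + s) (by linarith)]
      exact (hsg σ hσ0 s hs z hz).symm
    rw [h1, intervalIntegral.integral_comp_add_right f s, zero_add, add_comm t₀ s]
    have hadj := intervalIntegral.integral_add_adjacent_intervals (μ := volume)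
      (hfc.intervalIntegrable 0 s) (hfc.intervalIntegrable s (s + t₀))
    show (∫ u in s..(s+t₀), f u) = (∫ x in (0:ℝ)..(s+t₀), f x) - ∫ x in (0:ℝ)..s, f x
    linear_combination hadj
  set F : ℝ → ℂ := fun τ => ψ (τ + t₀) - ψ τ with hFdef
  have hF : HasDerivAt F (f (t + t₀) - f t) t := by
    have h1 : HasDerivAt (fun τ : ℝ => τ + t₀) 1 t := (hasDerivAt_id t).add_const t₀
    have h2 := HasDerivAt.scomp_of_eq (x := t) (hg := hψ (t + t₀)) (hh := h1) (hy := rfl)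
    have h3 := h2.sub (hψ t)
    simp only [one_smul] at h3
    exact h3
  have hFt : F t = H w := (hIdent t ht).symm
  have hKw : Tendsto (fun s => K s z) (𝓝[Ici (0:ℝ)] t) (nhds w) := timeCont hcont hz t ht
  have hevleft : ∀ᶠ s in 𝓝[Ici (0:ℝ)] t, g (F s) = K s z := by
    have h1 : ∀ᶠ s in 𝓝[Ici (0:ℝ)] t, g (H (K s z)) = K s z := hKw.eventually hg_left
    filter_upwards [h1, eventually_mem_nhdsWithin] with s h1s hs
    rw [show F s = H (K s z) from (hIdent s hs).symm]
    exact h1s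
  have hgat : HasDerivAt g D⁻¹ (F t) := by rw [hFt]; exact hg_strict.hasDerivAt
  have hcomp : HasDerivWithinAt (fun s => g (F s)) (D⁻¹ * (f (t + t₀) - f t)) (Ici 0) t :=
    HasDerivAt.comp_hasDerivWithinAt (x := t) (hh₂ := hgat) (hh := hF.hasDerivWithinAt)
  have heq1 : f (t + t₀) = K (t + t₀) z := hfval _ (by linarith)
  have heq2 : f t = K t z := hfval t ht
  rw [heq1, heq2] at hcomp
  refine hcomp.congr_of_eventuallyEq ?_ ?_
  · filter_upwards [hevleft] with s hs using hs.symm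
  · rw [hFt]
    exact (hg_left.self_of_nhds).symm

end KgenAux

/-- Every continuous composition semigroup of K-transforms (holomorphic self-maps of
the open unit disc fixing `0`, with `K_0 = id`, `K_{s+t} = K_s ∘ K_t`, continuous in
`t` locally uniformly in `z`) has a generator: a holomorphic `u : 𝔻 → ℂ` with
`Re u ≥ 0` such that `d/dt K_t(z) = -K_t(z)·u(K_t(z))`. -/
theorem Ksemigroup_generator_exists
    (K : ℝ → ℂ → ℂ)
    (hdiff : ∀ t ≥ (0 : ℝ), DifferentiableOn ℂ (K t) (ball (0 : ℂ) 1))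
    (hmaps : ∀ t ≥ (0 : ℝ), MapsTo (K t) (ball (0 : ℂ) 1) (ball (0 : ℂ) 1))
    (hzero : ∀ t ≥ (0 : ℝ), K t 0 = 0)
    (hid : ∀ z ∈ ball (0 : ℂ) 1, K 0 z = z)
    (hsg : ∀ s ≥ (0 : ℝ), ∀ t ≥ (0 : ℝ), ∀ z ∈ ball (0 : ℂ) 1, K (s + t) z = K s (K t z))
    (hcont : ∀ t₀ ≥ (0 : ℝ),
      TendstoLocallyUniformlyOn K (K t₀) (nhdsWithin t₀ (Ici 0)) (ball (0 : ℂ) 1)) :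
    ∃ u : ℂ → ℂ,
      DifferentiableOn ℂ u (ball (0 : ℂ) 1) ∧
      (∀ z ∈ ball (0 : ℂ) 1, 0 ≤ (u z).re) ∧
      ∀ z ∈ ball (0 : ℂ) 1, ∀ t ≥ (0 : ℝ),
        HasDerivWithinAt (fun s => K s z) (-(K t z) * u (K t z)) (Ici 0) t := by
  classical
  set G : ℂ → ℂ := fun w => derivWithin (fun s => K s w) (Ici 0) 0 with hGdef
  have hsel : ∀ w ∈ ball (0:ℂ) 1, ∃ t₀ > (0:ℝ),
      ∀ s ∈ Icc (0:ℝ) t₀, ‖deriv (K s) w - 1‖ ≤ 1/2 := by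
    intro w hw
    obtain ⟨ρ, hρ, hsub, t₀, ht₀, hbnd⟩ := KgenAux.smallness hdiff hid hcont hw
    exact ⟨t₀, ht₀, fun s hs => hbnd s hs w (mem_closedBall_self hρ.le)⟩
  have hA0 : ∀ w ∈ ball (0:ℂ) 1, HasDerivWithinAt (fun s => K s w) (G w) (Ici 0) 0 := by
    intro w hw
    obtain ⟨t₀, ht₀, hb⟩ := hsel w hw
    have hb' : ∀ s ∈ Icc (0:ℝ) t₀, ‖deriv (K s) (K 0 w) - 1‖ ≤ 1/2 := by
      intro s hs; rw [hid w hw]; exact hb s hs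
    have h := KgenAux.key hdiff hmaps hsg hcont hw le_rfl ht₀ hb'
    have hdw := h.derivWithin ((uniqueDiffOn_Ici (0:ℝ)) 0 Set.self_mem_Ici)
    show HasDerivWithinAt (fun s => K s w) (derivWithin (fun s => K s w) (Ici 0) 0) (Ici 0) 0
    rw [hdw]
    exact h
  have hG0 : G 0 = 0 := by
    have hconst : HasDerivWithinAt (fun _ : ℝ => (0:ℂ)) 0 (Ici (0:ℝ)) 0 :=
      hasDerivWithinAt_const _ _ _
    have hc : HasDerivWithinAt (fun s : ℝ => K s (0:ℂ)) 0 (Ici 0) 0 :=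
      hconst.congr (fun s hs => hzero s hs) (hzero 0 le_rfl)
    have := hc.derivWithin ((uniqueDiffOn_Ici (0:ℝ)) 0 Set.self_mem_Ici)
    simpa [hGdef] using this
  have hDW : ∀ z ∈ ball (0:ℂ) 1, ∀ t ≥ (0:ℝ),
      HasDerivWithinAt (fun s => K s z) (G (K t z)) (Ici 0) t := by
    intro z hz t ht
    have hw : K t z ∈ ball (0:ℂ) 1 := hmaps t ht hz
    have h0 := hA0 (K t z) hw
    have hinner : HasDerivWithinAt (fun s : ℝ => s - t) 1 (Ici t) t :=
      ((hasDerivAt_id t).sub_const t).hasDerivWithinAt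
    have hmapsIci : MapsTo (fun s : ℝ => s - t) (Ici t) (Ici 0) := fun s hs =>
      mem_Ici.2 (sub_nonneg.2 hs)
    have hcompshift := HasDerivWithinAt.scomp_of_eq (x := t) h0 hinner hmapsIci (sub_self t).symm
    rw [one_smul] at hcompshift
    have hshift : HasDerivWithinAt (fun s => K s z) (G (K t z)) (Ici t) t := by
      refine hcompshift.congr ?_ ?_
      · intro s hs
        show K s z = K (s - t) (K t z)
        rw [← hsg (s - t) (sub_nonneg.2 hs) t ht z hz, sub_add_cancel]
      · show K t z = K (t - t) (K t z)
        rw [sub_self, hid (K t z) hw]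
    obtain ⟨t₀, ht₀, hb⟩ := hsel (K t z) hw
    have h2 := KgenAux.key hdiff hmaps hsg hcont hz ht ht₀ hb
    have hu : UniqueDiffWithinAt ℝ (Ici t) t := (uniqueDiffOn_Ici t) t Set.self_mem_Ici
    have e1 := (h2.mono (Ici_subset_Ici.2 ht)).derivWithin hu
    have e2 := hshift.derivWithin hu
    exact (e1.symm.trans e2) ▸ h2
  have hGdiff : DifferentiableOn ℂ G (ball (0:ℂ) 1) := by
    intro z₀ hz₀
    obtain ⟨ρ, hρ, hsub, t₀, ht₀, hbnd⟩ := KgenAux.smallness hdiff hid hcont hz₀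
    set Φ : ℂ → ℂ := fun x => ∫ s in (0:ℝ)..t₀, deriv (K s) x with hΦdef
    have hball : ball z₀ ρ ⊆ ball (0:ℂ) 1 := ball_subset_closedBall.trans hsub
    have hform : ∀ x ∈ ball z₀ ρ, G x = (Φ x)⁻¹ * (K t₀ x - x) := by
      intro x hx
      have hx1 : x ∈ ball (0:ℂ) 1 := hball hx
      have hb' : ∀ s ∈ Icc (0:ℝ) t₀, ‖deriv (K s) (K 0 x) - 1‖ ≤ 1/2 := by
        intro s hs; rw [hid x hx1]; exact hbnd s hs x (ball_subset_closedBall hx)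
      have h := KgenAux.key hdiff hmaps hsg hcont hx1 le_rfl ht₀ hb'
      have e := h.derivWithin ((uniqueDiffOn_Ici (0:ℝ)) 0 Set.self_mem_Ici)
      rw [hid x hx1, zero_add] at e
      exact e
    have hΦne : Φ z₀ ≠ 0 := KgenAux.integral_ne_zero ht₀
      (KgenAux.derivCont hdiff hcont hz₀)
      (fun s hs => hbnd s hs z₀ (mem_closedBall_self hρ.le))
    have hH : ∀ x ∈ ball (0:ℂ) 1,
        HasDerivAt (fun y => ∫ s in (0:ℝ)..t₀, K s y) (Φ x) x := fun x hx =>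
      KgenAux.integralHasDerivAt hdiff hmaps hcont ht₀ hx
    have hH0diff : DifferentiableOn ℂ (fun y => ∫ s in (0:ℝ)..t₀, K s y) (ball (0:ℂ) 1) :=
      fun x hx => (hH x hx).differentiableAt.differentiableWithinAt
    have hderivdiff : DifferentiableOn ℂ (deriv fun y => ∫ s in (0:ℝ)..t₀, K s y)
        (ball (0:ℂ) 1) := ((hH0diff.analyticOnNhd isOpen_ball).deriv).differentiableOn
    have hΦdiffAt : DifferentiableAt ℂ Φ z₀ := by
      have h1 : DifferentiableAt ℂ (deriv fun y => ∫ s in (0:ℝ)..t₀, K s y) z₀ :=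
        hderivdiff.differentiableAt (isOpen_ball.mem_nhds hz₀)
      have hev : Φ =ᶠ[nhds z₀] (deriv fun y => ∫ s in (0:ℝ)..t₀, K s y) := by
        filter_upwards [isOpen_ball.mem_nhds hz₀] with x hx
        exact ((hH x hx).deriv).symm
      exact hev.differentiableAt_iff.2 h1
    have hKt₀ : DifferentiableAt ℂ (K t₀) z₀ :=
      (hdiff t₀ ht₀.le).differentiableAt (isOpen_ball.mem_nhds hz₀)
    have hnice : DifferentiableAt ℂ (fun x => (Φ x)⁻¹ * (K t₀ x - x)) z₀ :=
      (hΦdiffAt.inv hΦne).mul (hKt₀.sub differentiableAt_id)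
    have hev2 : G =ᶠ[nhds z₀] (fun x => (Φ x)⁻¹ * (K t₀ x - x)) := by
      filter_upwards [isOpen_ball.mem_nhds (mem_ball_self hρ)] with x hx
      exact hform x hx
    exact (hev2.differentiableAt_iff.2 hnice).differentiableWithinAt
  have hudiff : DifferentiableOn ℂ (fun w => -dslope G 0 w) (ball (0:ℂ) 1) := by
    have hds : DifferentiableOn ℂ (dslope G 0) (ball (0:ℂ) 1) := by
      intro x hx
      rcases eq_or_ne x 0 with rfl | hne
      · obtain ⟨p, hp⟩ := hGdiff.analyticAt (isOpen_ball.mem_nhds hx)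
        exact ((hp.has_fpower_series_dslope_fslope).analyticAt.differentiableAt).differentiableWithinAt
      · exact ((differentiableAt_dslope_of_ne hne).2
          (hGdiff.differentiableAt (isOpen_ball.mem_nhds hx))).differentiableWithinAt
    exact hds.neg
  have hval : ∀ w : ℂ, -w * (-dslope G 0 w) = G w := by
    intro w
    rcases eq_or_ne w 0 with rfl | hne
    · simp [hG0]
    · rw [dslope_of_ne _ hne, slope_def_field, hG0]
      field_simp
      ring
  have hpos : ∀ w ∈ ball (0:ℂ) 1, w ≠ 0 → 0 ≤ (-dslope G 0 w).re := by
    intro w hw hne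
    have hB0 : HasDerivWithinAt (fun s => K s w) (G w) (Ici 0) 0 := hA0 w hw
    set L : ℂ →L[ℝ] ℝ := Complex.reCLM.comp
      ((ContinuousLinearMap.mul ℂ ℂ ((starRingEnd ℂ) w)).restrictScalars ℝ) with hLdef
    have hq : HasDerivWithinAt (fun s => L (K s w)) (L (G w)) (Ici 0) 0 := by
      have := HasFDerivAt.comp_hasDerivWithinAt (x := (0:ℝ)) (hl := L.hasFDerivAt) (hf := hB0)
      exact this
    have hmax : ∀ s ≥ (0:ℝ), (fun s => L (K s w)) s ≤ (fun s => L (K s w)) 0 := by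
      intro s hs
      show ((starRingEnd ℂ) w * K s w).re ≤ ((starRingEnd ℂ) w * K 0 w).re
      have h1 : ((starRingEnd ℂ) w * K s w).re ≤ ‖(starRingEnd ℂ) w * K s w‖ :=
        Complex.re_le_norm _
      rw [norm_mul, Complex.norm_conj] at h1
      have h2 : ‖K s w‖ ≤ ‖w‖ :=
        Complex.norm_le_norm_of_mapsTo_ball (hdiff s hs)
          ((hmaps s hs).mono_right ball_subset_closedBall) (hzero s hs)
          (mem_ball_zero_iff.1 hw)
      have h3 : ((starRingEnd ℂ) w * K 0 w).re = ‖w‖ * ‖w‖ := by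
        rw [hid w hw, mul_comm, Complex.mul_conj]
        simp [Complex.normSq_eq_norm_sq, sq]
      have h4 : ‖w‖ * ‖K s w‖ ≤ ‖w‖ * ‖w‖ :=
        mul_le_mul_of_nonneg_left h2 (norm_nonneg w)
      rw [h3]
      linarith
    have hd : (((starRingEnd ℂ) w * G w)).re ≤ 0 := KgenAux.right_deriv_nonpos hq hmax
    have hnsq : (0:ℝ) < Complex.normSq w := Complex.normSq_pos.2 hne
    rw [dslope_of_ne _ hne, slope_def_field, hG0, sub_zero, sub_zero]
    have hcne : (starRingEnd ℂ) w ≠ 0 := by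
      simpa using hne
    have heq : G w / w = (G w * (starRingEnd ℂ) w) / ((Complex.normSq w : ℝ) : ℂ) := by
      rw [← Complex.mul_conj w]
      exact (mul_div_mul_right _ _ hcne).symm
    rw [heq]
    rw [Complex.neg_re, Complex.div_ofReal_re]
    have h5 : (G w * (starRingEnd ℂ) w).re ≤ 0 := by
      rw [mul_comm]; exact hd
    have h6 : (G w * (starRingEnd ℂ) w).re / Complex.normSq w ≤ 0 :=
      div_nonpos_iff.2 (Or.inr ⟨h5, hnsq.le⟩)
    linarith
  refine ⟨fun w => -dslope G 0 w, hudiff, ?_, ?_⟩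
  · intro w hw
    rcases eq_or_ne w 0 with rfl | hne
    · have hcontAt : ContinuousAt (fun w => -dslope G 0 w) 0 :=
        (hudiff.differentiableAt (isOpen_ball.mem_nhds hw)).continuousAt
      have htends : Tendsto (fun x => (-dslope G 0 x).re) (𝓝[≠] (0:ℂ))
          (nhds ((-dslope G 0 (0:ℂ)).re)) :=
        (Complex.continuous_re.continuousAt.comp hcontAt).tendsto.mono_left nhdsWithin_le_nhds
      refine ge_of_tendsto htends ?_
      filter_upwards [eventually_mem_nhdsWithin,
        (isOpen_ball.eventually_mem hw).filter_mono nhdsWithin_le_nhds] with x hxne hxball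
      exact hpos x hxball hxne
    · exact hpos w hw hne
  · intro z hz t ht
    have h := hDW z hz t ht
    show HasDerivWithinAt (fun s => K s z) (-(K t z) * (-dslope G 0 (K t z))) (Ici 0) t
    rw [hval (K t z)]
    exact h
end

section
/- Let u : 𝔻 → ℂ be holomorphic with Re u(z) ≥ 0 for all z ∈ 𝔻, and let (K_t)_{t≥0} be a family of holomorphic maps K_t : 𝔻 → 𝔻 such that K_0(z) = z and, for every z ∈ 𝔻, t ↦ K_t(z) is differentiable with d/dt K_t(z) = −K_t(z)·u(K_t(z)) for all t ≥ 0. Then (K_t)_{t≥0} is a continuous composition semigroup of K-transforms: K_t(0) = 0 for all t ≥ 0, K_{s+t} = K_s ∘ K_t for all s, t ≥ 0, and (t, z) ↦ K_t(z) is continuous in t locally uniformly in z. Moreover, the family solving this initial value problem is unique. -/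
open Metric Set

lemma decay_aux {u : ℂ → ℂ} (hure : ∀ z ∈ ball (0:ℂ) 1, 0 ≤ (u z).re)
    {γ : ℝ → ℂ}
    (hmem : ∀ t ≥ (0:ℝ), γ t ∈ ball (0:ℂ) 1)
    (hode : ∀ t ≥ (0:ℝ), HasDerivWithinAt γ (-(γ t) * u (γ t)) (Ici 0) t) :
    ∀ s ≥ (0:ℝ), ∀ t, s ≤ t → ‖γ t‖ ≤ ‖γ s‖ := by
  set g : ℝ → ℝ := fun t => Complex.normSq (γ t) with hgdef
  have hder : ∀ t ≥ (0:ℝ),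
      HasDerivWithinAt g (-2 * Complex.normSq (γ t) * (u (γ t)).re) (Ici 0) t := by
    intro t ht
    have h := hode t ht
    have hre : HasDerivWithinAt (fun s => (γ s).re) (Complex.reCLM (-(γ t) * u (γ t))) (Ici 0) t :=
      Complex.reCLM.hasFDerivAt.comp_hasDerivWithinAt t h
    have him : HasDerivWithinAt (fun s => (γ s).im) (Complex.imCLM (-(γ t) * u (γ t))) (Ici 0) t :=
      Complex.imCLM.hasFDerivAt.comp_hasDerivWithinAt t h
    have : HasDerivWithinAt (fun s => (γ s).re * (γ s).re + (γ s).im * (γ s).im)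
        ((Complex.reCLM (-(γ t) * u (γ t)) * (γ t).re + (γ t).re * Complex.reCLM (-(γ t) * u (γ t)))
        + (Complex.imCLM (-(γ t) * u (γ t)) * (γ t).im + (γ t).im * Complex.imCLM (-(γ t) * u (γ t))))
        (Ici 0) t := (hre.mul hre).add (him.mul him)
    convert this using 1
    · exact funext fun s => Complex.normSq_apply (γ s)
    simp only [Complex.reCLM_apply, Complex.imCLM_apply, Complex.neg_re, Complex.neg_im,
      Complex.mul_re, Complex.mul_im, Complex.normSq_apply]
    ring
  have hanti : AntitoneOn g (Ici (0:ℝ)) := by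
    apply antitoneOn_of_deriv_nonpos (convex_Ici 0)
    · exact fun t ht => (hder t ht).continuousWithinAt
    · rw [interior_Ici]
      exact fun t ht =>
        (((hder t ht.le).hasDerivAt (Ici_mem_nhds ht)).differentiableAt).differentiableWithinAt
    · rw [interior_Ici]
      intro t ht
      rw [((hder t ht.le).hasDerivAt (Ici_mem_nhds ht)).deriv]
      nlinarith [Complex.normSq_nonneg (γ t), hure _ (hmem t ht.le)]
  intro s hs t hst
  have h2 : Complex.normSq (γ t) ≤ Complex.normSq (γ s) :=
    hanti hs (le_trans hs hst) hst
  have := Real.sqrt_le_sqrt h2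
  simpa [Complex.norm_def] using this

lemma lip_aux {u : ℂ → ℂ} (hu : DifferentiableOn ℂ u (ball (0:ℂ) 1))
    {r : ℝ} (hr : r < 1) :
    ∃ C : NNReal, LipschitzOnWith C (fun w => -w * u w) (closedBall (0:ℂ) r) := by
  set f : ℂ → ℂ := fun w => -w * u w with hfdef
  have hf : DifferentiableOn ℂ f (ball (0:ℂ) 1) := (differentiable_id.neg.differentiableOn).mul hu
  have hsub : closedBall (0:ℂ) r ⊆ ball (0:ℂ) 1 := by
    intro x hx
    simp only [mem_closedBall, mem_ball] at *
    linarith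
  have hcd : ContDiffOn ℂ 1 f (ball (0:ℂ) 1) :=
    (hf.analyticOnNhd isOpen_ball).contDiffOn isOpen_ball.uniqueDiffOn
  have hcont : ContinuousOn (fderiv ℂ f) (ball (0:ℂ) 1) :=
    hcd.continuousOn_fderiv_of_isOpen isOpen_ball le_rfl
  obtain ⟨C, hC⟩ := (isCompact_closedBall (0:ℂ) r).exists_bound_of_continuousOn
    (hcont.mono hsub)
  refine ⟨⟨max C 0, le_max_right _ _⟩, ?_⟩
  apply Convex.lipschitzOnWith_of_nnnorm_fderiv_le
    (fun x hx => hf.differentiableAt (isOpen_ball.mem_nhds (hsub hx)))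
    (fun x hx => ?_) (convex_closedBall _ _)
  change (‖fderiv ℂ f x‖₊ : ℝ) ≤ max C 0
  rw [coe_nnnorm]
  exact le_trans (hC x hx) (le_max_left _ _)

lemma unique_aux {u : ℂ → ℂ} (hu : DifferentiableOn ℂ u (ball (0:ℂ) 1))
    (hure : ∀ z ∈ ball (0:ℂ) 1, 0 ≤ (u z).re)
    {γ δ : ℝ → ℂ} {z : ℂ} (hz : z ∈ ball (0:ℂ) 1)
    (hmemγ : ∀ t ≥ (0:ℝ), γ t ∈ ball (0:ℂ) 1)
    (hodeγ : ∀ t ≥ (0:ℝ), HasDerivWithinAt γ (-(γ t) * u (γ t)) (Ici 0) t)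
    (hγ0 : γ 0 = z)
    (hmemδ : ∀ t ≥ (0:ℝ), δ t ∈ ball (0:ℂ) 1)
    (hodeδ : ∀ t ≥ (0:ℝ), HasDerivWithinAt δ (-(δ t) * u (δ t)) (Ici 0) t)
    (hδ0 : δ 0 = z) :
    ∀ t ≥ (0:ℝ), γ t = δ t := by
  intro T hT
  have hz1 : ‖z‖ < 1 := by simpa [mem_ball, Complex.dist_eq] using hz
  obtain ⟨C, hC⟩ := lip_aux hu hz1
  have hγball : ∀ t ∈ Ico (0:ℝ) T, γ t ∈ closedBall (0:ℂ) ‖z‖ := by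
    intro t ht
    rw [mem_closedBall, Complex.dist_eq, sub_zero, ← hγ0]
    exact decay_aux hure hmemγ hodeγ 0 le_rfl t ht.1
  have hδball : ∀ t ∈ Ico (0:ℝ) T, δ t ∈ closedBall (0:ℂ) ‖z‖ := by
    intro t ht
    rw [mem_closedBall, Complex.dist_eq, sub_zero, ← hδ0]
    exact decay_aux hure hmemδ hodeδ 0 le_rfl t ht.1
  have key := ODE_solution_unique_of_mem_Icc_right
    (v := fun _ w => -w * u w) (s := fun _ => closedBall (0:ℂ) ‖z‖) (K := C)
    (fun _ _ => hC)
    (fun t ht => ((hodeγ t ht.1).continuousWithinAt).mono Icc_subset_Ici_self)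
    (fun t ht => (hodeγ t ht.1).mono (Ici_subset_Ici.mpr ht.1))
    hγball
    (fun t ht => ((hodeδ t ht.1).continuousWithinAt).mono Icc_subset_Ici_self)
    (fun t ht => (hodeδ t ht.1).mono (Ici_subset_Ici.mpr ht.1))
    hδball
    (hγ0.trans hδ0.symm)
  exact key ⟨hT, le_rfl⟩

/-- Conversely, given a holomorphic `u : 𝔻 → ℂ` with `Re u ≥ 0`, any family of
holomorphic self-maps `K_t` of the disc with `K_0 = id` solving
`d/dt K_t(z) = -K_t(z)·u(K_t(z))` is a continuous composition semigroup of
K-transforms (`K_t(0) = 0`, `K_{s+t} = K_s ∘ K_t`, continuity in `t` locally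
uniformly in `z`), and the solution of this initial value problem is unique. -/
theorem Ksemigroup_of_generator
    (u : ℂ → ℂ)
    (hu : DifferentiableOn ℂ u (ball (0 : ℂ) 1))
    (hure : ∀ z ∈ ball (0 : ℂ) 1, 0 ≤ (u z).re)
    (K : ℝ → ℂ → ℂ)
    (hdiff : ∀ t ≥ (0 : ℝ), DifferentiableOn ℂ (K t) (ball (0 : ℂ) 1))
    (hmaps : ∀ t ≥ (0 : ℝ), MapsTo (K t) (ball (0 : ℂ) 1) (ball (0 : ℂ) 1))
    (hid : ∀ z ∈ ball (0 : ℂ) 1, K 0 z = z)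
    (hode : ∀ z ∈ ball (0 : ℂ) 1, ∀ t ≥ (0 : ℝ),
      HasDerivWithinAt (fun s => K s z) (-(K t z) * u (K t z)) (Ici 0) t) :
    (∀ t ≥ (0 : ℝ), K t 0 = 0) ∧
    (∀ s ≥ (0 : ℝ), ∀ t ≥ (0 : ℝ), ∀ z ∈ ball (0 : ℂ) 1, K (s + t) z = K s (K t z)) ∧
    (∀ t₀ ≥ (0 : ℝ),
      TendstoLocallyUniformlyOn K (K t₀) (nhdsWithin t₀ (Ici 0)) (ball (0 : ℂ) 1)) ∧
    (∀ K' : ℝ → ℂ → ℂ,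
      (∀ t ≥ (0 : ℝ), DifferentiableOn ℂ (K' t) (ball (0 : ℂ) 1)) →
      (∀ t ≥ (0 : ℝ), MapsTo (K' t) (ball (0 : ℂ) 1) (ball (0 : ℂ) 1)) →
      (∀ z ∈ ball (0 : ℂ) 1, K' 0 z = z) →
      (∀ z ∈ ball (0 : ℂ) 1, ∀ t ≥ (0 : ℝ),
        HasDerivWithinAt (fun s => K' s z) (-(K' t z) * u (K' t z)) (Ici 0) t) →
      ∀ t ≥ (0 : ℝ), ∀ z ∈ ball (0 : ℂ) 1, K' t z = K t z) := by
  have hball0 : (0:ℂ) ∈ ball (0:ℂ) 1 := by simp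
  -- norm decay along trajectories
  have hnorm : ∀ w ∈ ball (0:ℂ) 1, ∀ t ≥ (0:ℝ), ‖K t w‖ ≤ ‖w‖ := by
    intro w hw t ht
    have := decay_aux hure (γ := fun s => K s w) (fun s hs => hmaps s hs hw)
      (fun s hs => hode w hw s hs) 0 le_rfl t ht
    rwa [hid w hw] at this
  have hK0 : ∀ t ≥ (0:ℝ), K t 0 = 0 := by
    intro t ht
    have h := hnorm 0 hball0 t ht
    rw [norm_zero] at h
    exact norm_le_zero_iff.mp h
  refine ⟨hK0, ?_, ?_, ?_⟩
  · -- semigroup property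
    intro s hs t ht z hz
    have hw : K t z ∈ ball (0:ℂ) 1 := hmaps t ht hz
    have hγmem : ∀ σ ≥ (0:ℝ), K (σ + t) z ∈ ball (0:ℂ) 1 :=
      fun σ hσ => hmaps _ (add_nonneg hσ ht) hz
    have hγode : ∀ σ ≥ (0:ℝ), HasDerivWithinAt (fun σ => K (σ + t) z)
        (-(K (σ + t) z) * u (K (σ + t) z)) (Ici 0) σ := by
      intro σ hσ
      have h := hode z hz (σ + t) (add_nonneg hσ ht)
      have hin : HasDerivWithinAt (fun x : ℝ => x + t) 1 (Ici 0) σ :=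
        (hasDerivWithinAt_id σ _).add_const t
      have hmt : MapsTo (fun x : ℝ => x + t) (Ici 0) (Ici 0) :=
        fun x hx => mem_Ici.mpr (add_nonneg (mem_Ici.mp hx) ht)
      have := HasDerivWithinAt.scomp σ h hin hmt
      simpa [Function.comp_def] using this
    exact unique_aux hu hure hw hγmem hγode (by rw [zero_add])
      (fun σ hσ => hmaps σ hσ hw) (fun σ hσ => hode _ hw σ hσ) (hid _ hw) s hs
  · -- continuity in t, locally uniformly in z
    intro t₀ ht₀
    rw [tendstoLocallyUniformlyOn_iff_forall_isCompact isOpen_ball]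
    intro k hk hkc
    rcases k.eq_empty_or_nonempty with rfl | hne
    · intro V hV
      filter_upwards with t x hx
      exact absurd hx (notMem_empty x)
    obtain ⟨w₀, hw₀k, hmax⟩ := hkc.exists_isMaxOn hne continuous_norm.continuousOn
    set r : ℝ := ‖w₀‖ with hrdef
    have hr1 : r < 1 := by
      have := hk hw₀k
      simpa [mem_ball, Complex.dist_eq] using this
    have hsub : closedBall (0:ℂ) r ⊆ ball (0:ℂ) 1 := by
      intro x hx
      simp only [mem_closedBall, mem_ball] at *
      linarith
    obtain ⟨M, hM⟩ := (isCompact_closedBall (0:ℂ) r).exists_bound_of_continuousOn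
      (hu.continuousOn.mono hsub)
    have hMr : 0 ≤ r * M := by
      have h0 : (0:ℂ) ∈ closedBall (0:ℂ) r := by
        simp [mem_closedBall, hrdef, norm_nonneg]
      exact mul_nonneg (norm_nonneg _) (le_trans (norm_nonneg _) (hM 0 h0))
    set D : ℝ := r * M + 1 with hDdef
    have hD : 0 < D := by positivity
    -- uniform Lipschitz bound in time
    have hlip : ∀ w ∈ k, ∀ a ≥ (0:ℝ), ∀ b, a ≤ b → ‖K b w - K a w‖ ≤ r * M * (b - a) := by
      intro w hwk a ha b hab
      have hw : w ∈ ball (0:ℂ) 1 := hk hwk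
      have hwr : ‖w‖ ≤ r := hmax hwk
      have hIci : Icc a b ⊆ Ici (0:ℝ) := Icc_subset_Ici_self.trans (Ici_subset_Ici.mpr ha)
      have hbd : ∀ x ∈ Ico a b, ‖-(K x w) * u (K x w)‖ ≤ r * M := by
        intro x hx
        have hx0 : (0:ℝ) ≤ x := le_trans ha hx.1
        have h1 : ‖K x w‖ ≤ r := le_trans (hnorm w hw x hx0) hwr
        have h2 : K x w ∈ closedBall (0:ℂ) r := by
          simpa [mem_closedBall, Complex.dist_eq] using h1
        rw [norm_mul, norm_neg]
        exact mul_le_mul h1 (hM _ h2) (norm_nonneg _) (norm_nonneg w₀)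
      have := norm_image_sub_le_of_norm_deriv_right_le_segment
        (f := fun s => K s w) (f' := fun x => -(K x w) * u (K x w)) (a := a) (b := b)
        (fun x hx => ((hode w hw x (hIci hx)).continuousWithinAt).mono hIci)
        (fun x hx => (hode w hw x (le_trans ha hx.1)).mono
          (Ici_subset_Ici.mpr (le_trans ha hx.1)))
        hbd b (right_mem_Icc.mpr hab)
      exact this
    rw [Metric.tendstoUniformlyOn_iff]
    intro ε hε
    have hev1 : ∀ᶠ t in nhdsWithin t₀ (Ici 0), |t - t₀| < ε / D := by
      apply Filter.Eventually.filter_mono nhdsWithin_le_nhds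
      have : Ioo (t₀ - ε / D) (t₀ + ε / D) ∈ nhds t₀ :=
        Ioo_mem_nhds (by linarith [div_pos hε hD]) (by linarith [div_pos hε hD])
      filter_upwards [this] with t ht
      rw [abs_sub_lt_iff]
      constructor <;> linarith [ht.1, ht.2]
    have hev2 : ∀ᶠ t in nhdsWithin t₀ (Ici 0), t ∈ Ici (0:ℝ) := eventually_mem_nhdsWithin
    filter_upwards [hev1, hev2] with t h1 h2
    intro w hwk
    rw [dist_eq_norm]
    have hbound : ‖K t₀ w - K t w‖ ≤ r * M * |t - t₀| := by
      rcases le_total t t₀ with h | h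
      · have := hlip w hwk t h2 t₀ h
        rw [abs_of_nonpos (by linarith)]
        calc ‖K t₀ w - K t w‖ ≤ r * M * (t₀ - t) := this
          _ = r * M * -(t - t₀) := by ring
      · have := hlip w hwk t₀ ht₀ t h
        rw [abs_of_nonneg (by linarith), ← norm_neg]
        simpa [neg_sub] using this
    have h3 : r * M * |t - t₀| ≤ D * |t - t₀| :=
      mul_le_mul_of_nonneg_right (by linarith) (abs_nonneg _)
    have h4 : D * |t - t₀| < D * (ε / D) := mul_lt_mul_of_pos_left h1 hD
    have h5 : D * (ε / D) = ε := by field_simp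
    exact lt_of_le_of_lt (hbound.trans h3) (h4.trans_eq h5)
  · -- uniqueness
    intro K' hdiff' hmaps' hid' hode' t ht z hz
    exact unique_aux hu hure hz (fun τ hτ => hmaps' τ hτ hz) (fun τ hτ => hode' z hz τ hτ)
      (hid' z hz) (fun τ hτ => hmaps τ hτ hz) (fun τ hτ => hode z hz τ hτ) (hid z hz) t ht
end

section
/- Let μ be a probability measure on the unit circle S¹ that is not concentrated in one point, and suppose μ can be embedded into a continuous monotone convolution semigroup, i.e. there exist a continuous composition semigroup of K-transforms (K_t)_{t≥0} with generator u (so d/dt K_t(z) = −K_t(z)·u(K_t(z)), u holomorphic on 𝔻 with Re u ≥ 0) and t₀ ≥ 0 with K_μ = K_{t₀}. Then: K_μ′(z) ≠ 0 for all z ∈ 𝔻; the iterates K_μ^{∘n} satisfy lim_{n→∞} −K_μ^{∘n}(z)/(K_μ^{∘n})′(z) = −z·u(z)/u(0) locally uniformly on 𝔻; in particular this limit is of the form α·z·u(z) with the nonzero constant α = −1/u(0), and K_μ′(0) = e^{−t₀·u(0)}. -/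
open MeasureTheory Metric

open Set Filter intervalIntegral

section Flow

variable {K : ℝ → ℂ → ℂ} {u : ℂ → ℂ}

/-- Continuity of the flow in time. -/
lemma flow_contOn
    (hode : ∀ z ∈ ball (0 : ℂ) 1, ∀ t ≥ (0 : ℝ),
      HasDerivWithinAt (fun s => K s z) (-(K t z) * u (K t z)) (Ici 0) t)
    {z : ℂ} (hz : z ∈ ball (0 : ℂ) 1) :
    ContinuousOn (fun s => K s z) (Ici (0:ℝ)) := fun s hs =>
  (hode z hz s hs).continuousWithinAt

lemma flow_v_cont
    (hmaps : ∀ t ≥ (0 : ℝ), MapsTo (K t) (ball (0 : ℂ) 1) (ball (0 : ℂ) 1))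
    (hu : DifferentiableOn ℂ u (ball (0 : ℂ) 1))
    (hode : ∀ z ∈ ball (0 : ℂ) 1, ∀ t ≥ (0 : ℝ),
      HasDerivWithinAt (fun s => K s z) (-(K t z) * u (K t z)) (Ici 0) t)
    {z : ℂ} (hz : z ∈ ball (0 : ℂ) 1) :
    Continuous (fun s : ℝ => u (K (max s 0) z)) := by
  have h1 : Continuous fun s : ℝ => max s 0 := continuous_id.max continuous_const
  have h2 : Continuous fun s : ℝ => K (max s 0) z :=
    (flow_contOn hode hz).comp_continuous h1 (fun s => le_max_right s 0)
  exact hu.continuousOn.comp_continuous h2 (fun s => hmaps _ (le_max_right s 0) hz)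

/-- Explicit solution formula for the flow. -/
lemma flow_formula
    (hmaps : ∀ t ≥ (0 : ℝ), MapsTo (K t) (ball (0 : ℂ) 1) (ball (0 : ℂ) 1))
    (hid : ∀ z ∈ ball (0 : ℂ) 1, K 0 z = z)
    (hu : DifferentiableOn ℂ u (ball (0 : ℂ) 1))
    (hode : ∀ z ∈ ball (0 : ℂ) 1, ∀ t ≥ (0 : ℝ),
      HasDerivWithinAt (fun s => K s z) (-(K t z) * u (K t z)) (Ici 0) t)
    {z : ℂ} (hz : z ∈ ball (0 : ℂ) 1) {t : ℝ} (ht : 0 ≤ t) :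
    K t z = z * Complex.exp (-∫ s in (0:ℝ)..t, u (K (max s 0) z)) := by
  have hvcont : Continuous (fun s : ℝ => u (K (max s 0) z)) := flow_v_cont hmaps hu hode hz
  set F : ℝ → ℂ := fun τ => ∫ s in (0:ℝ)..τ, u (K (max s 0) z) with hFdef
  have hFd : ∀ τ : ℝ, HasDerivAt F (u (K (max τ 0) z)) τ := fun τ =>
    (hvcont.integral_hasStrictDerivAt 0 τ).hasDerivAt
  have hFc : Continuous F := continuous_iff_continuousAt.2 fun τ => (hFd τ).continuousAt
  have key : ∀ x ∈ Icc (0:ℝ) t, K x z * Complex.exp (F x) = K 0 z * Complex.exp (F 0) := by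
    apply constant_of_has_deriv_right_zero
    · exact ((flow_contOn hode hz).mono Icc_subset_Ici_self).mul
        ((Complex.continuous_exp.comp hFc).continuousOn)
    · intro x hx
      have hx0 : (0:ℝ) ≤ x := hx.1
      have hK := (hode z hz x hx0).mono (Ici_subset_Ici.2 hx0)
      have hE : HasDerivWithinAt (fun s => Complex.exp (F s))
          (Complex.exp (F x) * u (K (max x 0) z)) (Ici x) x :=
        ((hFd x).cexp).hasDerivWithinAt
      have := hK.mul hE
      rw [max_eq_left hx0] at this
      exact this.congr_deriv (by ring)
  have h1 := key t ⟨le_refl 0 |>.trans ht, le_rfl⟩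
  rw [hid z hz] at h1
  have hF0 : F 0 = 0 := integral_same
  rw [hF0, Complex.exp_zero, mul_one] at h1
  have := Complex.exp_ne_zero (F t)
  rw [Complex.exp_neg, eq_mul_inv_iff_mul_eq₀ this]
  exact h1

lemma flow_norm
    (hmaps : ∀ t ≥ (0 : ℝ), MapsTo (K t) (ball (0 : ℂ) 1) (ball (0 : ℂ) 1))
    (hid : ∀ z ∈ ball (0 : ℂ) 1, K 0 z = z)
    (hu : DifferentiableOn ℂ u (ball (0 : ℂ) 1))
    (hode : ∀ z ∈ ball (0 : ℂ) 1, ∀ t ≥ (0 : ℝ),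
      HasDerivWithinAt (fun s => K s z) (-(K t z) * u (K t z)) (Ici 0) t)
    {z : ℂ} (hz : z ∈ ball (0 : ℂ) 1) {t : ℝ} (ht : 0 ≤ t) :
    ‖K t z‖ = ‖z‖ * Real.exp (-∫ s in (0:ℝ)..t, (u (K (max s 0) z)).re) := by
  have hvcont : Continuous (fun s : ℝ => u (K (max s 0) z)) := flow_v_cont hmaps hu hode hz
  have hre : (∫ s in (0:ℝ)..t, u (K (max s 0) z)).re
      = ∫ s in (0:ℝ)..t, (u (K (max s 0) z)).re := by
    have := (Complex.reCLM).intervalIntegral_comp_comm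
      (hvcont.intervalIntegrable (μ := MeasureTheory.volume) 0 t)
    simpa using this.symm
  rw [flow_formula hmaps hid hu hode hz ht, norm_mul,
    Complex.norm_exp, Complex.neg_re, hre]

lemma flow_norm_le
    (hmaps : ∀ t ≥ (0 : ℝ), MapsTo (K t) (ball (0 : ℂ) 1) (ball (0 : ℂ) 1))
    (hid : ∀ z ∈ ball (0 : ℂ) 1, K 0 z = z)
    (hu : DifferentiableOn ℂ u (ball (0 : ℂ) 1))
    (hure : ∀ z ∈ ball (0 : ℂ) 1, 0 ≤ (u z).re)
    (hode : ∀ z ∈ ball (0 : ℂ) 1, ∀ t ≥ (0 : ℝ),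
      HasDerivWithinAt (fun s => K s z) (-(K t z) * u (K t z)) (Ici 0) t)
    {z : ℂ} (hz : z ∈ ball (0 : ℂ) 1) {t : ℝ} (ht : 0 ≤ t) :
    ‖K t z‖ ≤ ‖z‖ := by
  rw [flow_norm hmaps hid hu hode hz ht]
  have h1 : (0:ℝ) ≤ ∫ s in (0:ℝ)..t, (u (K (max s 0) z)).re :=
    intervalIntegral.integral_nonneg ht
      (fun s _ => hure _ (hmaps _ (le_max_right s 0) hz))
  calc ‖z‖ * Real.exp (-∫ s in (0:ℝ)..t, (u (K (max s 0) z)).re)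
      ≤ ‖z‖ * 1 := by
        apply mul_le_mul_of_nonneg_left _ (norm_nonneg z)
        rw [Real.exp_le_one_iff]
        linarith
    _ = ‖z‖ := mul_one _

lemma flow_ne_zero
    (hmaps : ∀ t ≥ (0 : ℝ), MapsTo (K t) (ball (0 : ℂ) 1) (ball (0 : ℂ) 1))
    (hid : ∀ z ∈ ball (0 : ℂ) 1, K 0 z = z)
    (hu : DifferentiableOn ℂ u (ball (0 : ℂ) 1))
    (hode : ∀ z ∈ ball (0 : ℂ) 1, ∀ t ≥ (0 : ℝ),
      HasDerivWithinAt (fun s => K s z) (-(K t z) * u (K t z)) (Ici 0) t)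
    {z : ℂ} (hz : z ∈ ball (0 : ℂ) 1) (hz0 : z ≠ 0) {t : ℝ} (ht : 0 ≤ t) :
    K t z ≠ 0 := by
  rw [flow_formula hmaps hid hu hode hz ht]
  exact mul_ne_zero hz0 (Complex.exp_ne_zero _)

lemma flow_decay
    (hmaps : ∀ t ≥ (0 : ℝ), MapsTo (K t) (ball (0 : ℂ) 1) (ball (0 : ℂ) 1))
    (hid : ∀ z ∈ ball (0 : ℂ) 1, K 0 z = z)
    (hu : DifferentiableOn ℂ u (ball (0 : ℂ) 1))
    (hure : ∀ z ∈ ball (0 : ℂ) 1, 0 ≤ (u z).re)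
    (hode : ∀ z ∈ ball (0 : ℂ) 1, ∀ t ≥ (0 : ℝ),
      HasDerivWithinAt (fun s => K s z) (-(K t z) * u (K t z)) (Ici 0) t)
    {r δ : ℝ} (hδ : ∀ y ∈ closedBall (0:ℂ) r, δ ≤ (u y).re)
    {z : ℂ} (hz : z ∈ ball (0 : ℂ) 1) (hzr : ‖z‖ ≤ r) {t : ℝ} (ht : 0 ≤ t) :
    ‖K t z‖ ≤ r * Real.exp (-(δ * t)) := by
  rw [flow_norm hmaps hid hu hode hz ht]
  have h1 : δ * t ≤ ∫ s in (0:ℝ)..t, (u (K (max s 0) z)).re := by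
    have hconst : δ * t = ∫ _ in (0:ℝ)..t, δ := by
      rw [intervalIntegral.integral_const, smul_eq_mul, sub_zero, mul_comm]
    rw [hconst]
    apply intervalIntegral.integral_mono_on ht
      (intervalIntegrable_const)
    · exact (Complex.continuous_re.comp (flow_v_cont hmaps hu hode hz)).intervalIntegrable 0 t
    · intro s _
      apply hδ
      rw [mem_closedBall_zero_iff]
      exact (flow_norm_le hmaps hid hu hure hode hz (le_max_right s 0)).trans hzr
  have := Real.exp_le_exp.2 (neg_le_neg h1)
  calc ‖z‖ * Real.exp (-∫ s in (0:ℝ)..t, (u (K (max s 0) z)).re)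
      ≤ r * Real.exp (-(δ * t)) :=
        mul_le_mul hzr this (Real.exp_nonneg _) ((norm_nonneg z).trans hzr)

/-- The fundamental identity `K_t(z)·u(K_t(z)) = (K_t)'(z)·z·u(z)`. -/
lemma deriv_identity
    (hdiff : ∀ t ≥ (0 : ℝ), DifferentiableOn ℂ (K t) (ball (0 : ℂ) 1))
    (hid : ∀ z ∈ ball (0 : ℂ) 1, K 0 z = z)
    (hsg : ∀ s ≥ (0 : ℝ), ∀ t ≥ (0 : ℝ), ∀ z ∈ ball (0 : ℂ) 1, K (s + t) z = K s (K t z))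
    (hode : ∀ z ∈ ball (0 : ℂ) 1, ∀ t ≥ (0 : ℝ),
      HasDerivWithinAt (fun s => K s z) (-(K t z) * u (K t z)) (Ici 0) t)
    {t : ℝ} (ht : 0 ≤ t) {z : ℂ} (hz : z ∈ ball (0 : ℂ) 1) :
    K t z * u (K t z) = deriv (K t) z * (z * u z) := by
  have h1 : HasDerivWithinAt (fun s : ℝ => K (t + s) z)
      (-(K t z) * u (K t z)) (Ici 0) 0 := by
    have hshift : HasDerivWithinAt (fun s : ℝ => t + s) 1 (Ici (0:ℝ)) 0 :=
      ((hasDerivAt_id (0:ℝ)).const_add t).hasDerivWithinAt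
    have hmapsTo : MapsTo (fun s : ℝ => t + s) (Ici 0) (Ici 0) := fun s hs =>
      add_nonneg ht hs
    have := HasDerivWithinAt.scomp_of_eq (0:ℝ) (hode z hz t ht) hshift hmapsTo (by norm_num)
    simpa [Function.comp_def] using this
  have h2 : HasDerivWithinAt (fun s : ℝ => K (t + s) z)
      (deriv (K t) z * (-z * u z)) (Ici 0) 0 := by
    have hKt : HasDerivAt (K t) (deriv (K t) z) z :=
      ((hdiff t ht).differentiableAt (isOpen_ball.mem_nhds hz)).hasDerivAt
    have hin : HasDerivWithinAt (fun s : ℝ => K s z) (-z * u z) (Ici 0) 0 := by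
      have h := hode z hz 0 le_rfl
      rwa [hid z hz] at h
    have hcomp : HasDerivWithinAt ((K t) ∘ fun s : ℝ => K s z)
        (deriv (K t) z * (-z * u z)) (Ici 0) 0 :=
      HasDerivAt.comp_hasDerivWithinAt_of_eq (0:ℝ) hKt hin ((hid z hz).symm)
    apply hcomp.congr
    · intro s hs
      exact hsg t ht s hs z hz
    · simpa using hsg t ht 0 le_rfl z hz
  have hU : UniqueDiffWithinAt ℝ (Ici (0:ℝ)) 0 := uniqueDiffOn_Ici 0 0 self_mem_Ici
  have e1 := h1.derivWithin hU
  have e2 := h2.derivWithin hU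
  rw [e1] at e2
  linear_combination -e2

/-- The derivative of `K t` at the origin is `exp (-t u 0)`. -/
lemma deriv_K_zero
    (hdiff : ∀ t ≥ (0 : ℝ), DifferentiableOn ℂ (K t) (ball (0 : ℂ) 1))
    (hmaps : ∀ t ≥ (0 : ℝ), MapsTo (K t) (ball (0 : ℂ) 1) (ball (0 : ℂ) 1))
    (hzero : ∀ t ≥ (0 : ℝ), K t 0 = 0)
    (hid : ∀ z ∈ ball (0 : ℂ) 1, K 0 z = z)
    (hu : DifferentiableOn ℂ u (ball (0 : ℂ) 1))
    (hure : ∀ z ∈ ball (0 : ℂ) 1, 0 ≤ (u z).re)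
    (hode : ∀ z ∈ ball (0 : ℂ) 1, ∀ t ≥ (0 : ℝ),
      HasDerivWithinAt (fun s => K s z) (-(K t z) * u (K t z)) (Ici 0) t)
    {t : ℝ} (ht : 0 ≤ t) :
    deriv (K t) 0 = Complex.exp (-((t:ℂ) * u 0)) := by
  have h0B : (0:ℂ) ∈ ball (0:ℂ) 1 := mem_ball_self one_pos
  have hd : HasDerivAt (K t) (deriv (K t) 0) 0 :=
    ((hdiff t ht).differentiableAt (isOpen_ball.mem_nhds h0B)).hasDerivAt
  have hslope : Tendsto (slope (K t) 0) (nhdsWithin 0 {(0:ℂ)}ᶜ) (nhds (deriv (K t) 0)) :=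
    hasDerivAt_iff_tendsto_slope.1 hd
  set seq : ℕ → ℂ := fun k => (((k:ℝ) + 2)⁻¹ : ℝ) with hseqdef
  have hseqnorm : ∀ k : ℕ, ‖seq k‖ = ((k:ℝ) + 2)⁻¹ := by
    intro k
    rw [hseqdef]
    simp only [Complex.norm_real, Real.norm_eq_abs]
    rw [abs_of_pos (by positivity)]
  have hseqball : ∀ k : ℕ, seq k ∈ ball (0:ℂ) 1 := by
    intro k
    rw [mem_ball_zero_iff, hseqnorm]
    rw [inv_lt_one_iff₀]
    right; push_cast; linarith [Nat.cast_nonneg (α := ℝ) k]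
  have hseqne : ∀ k : ℕ, seq k ≠ 0 := by
    intro k
    have hpos : (0:ℝ) < ((k:ℝ) + 2)⁻¹ := by positivity
    simp only [hseqdef, ne_eq, Complex.ofReal_eq_zero]
    exact ne_of_gt hpos
  have hseqtendsto : Tendsto seq atTop (nhdsWithin 0 {(0:ℂ)}ᶜ) := by
    apply tendsto_nhdsWithin_of_tendsto_nhds_of_eventually_within
    · have h1 : Tendsto (fun k : ℕ => ((k:ℝ) + 2)) atTop atTop :=
        tendsto_atTop_add_const_right _ 2 tendsto_natCast_atTop_atTop
      have h2 : Tendsto (fun k : ℕ => ((k:ℝ) + 2)⁻¹) atTop (nhds 0) :=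
        tendsto_inv_atTop_zero.comp h1
      have h3 := (Complex.continuous_ofReal.tendsto 0).comp h2
      rw [Complex.ofReal_zero] at h3
      exact h3
    · exact Eventually.of_forall fun k => hseqne k
  have limit1 : Tendsto (fun k => slope (K t) 0 (seq k)) atTop (nhds (deriv (K t) 0)) :=
    hslope.comp hseqtendsto
  have hformula : ∀ k : ℕ, slope (K t) 0 (seq k)
      = Complex.exp (-∫ s in (0:ℝ)..t, u (K (max s 0) (seq k))) := by
    intro k
    rw [slope_def_field, flow_formula hmaps hid hu hode (hseqball k) ht, hzero t ht]
    field_simp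
    rw [sub_zero, sub_zero, mul_comm, mul_div_assoc, div_self (hseqne k), mul_one]
  have hlim2 : Tendsto (fun k => ∫ s in (0:ℝ)..t, u (K (max s 0) (seq k))) atTop
      (nhds ((t:ℂ) * u 0)) := by
    rw [Metric.tendsto_atTop]
    intro ε hε
    have hucont : ContinuousAt u 0 :=
      (hu.differentiableAt (isOpen_ball.mem_nhds h0B)).continuousAt
    obtain ⟨δ, hδpos, hδ⟩ := Metric.continuousAt_iff.1 hucont (ε / (t+1)) (by positivity)
    obtain ⟨N, hN⟩ := exists_nat_gt (δ⁻¹)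
    refine ⟨N, fun k hk => ?_⟩
    have hknorm : ‖seq k‖ < δ := by
      rw [hseqnorm]
      rw [inv_lt_comm₀ (by positivity) hδpos]
      calc δ⁻¹ < N := hN
        _ ≤ (k:ℝ) := by exact_mod_cast hk
        _ < (k:ℝ) + 2 := by linarith
    have hbound : ∀ s ∈ Set.uIoc (0:ℝ) t, ‖u (K (max s 0) (seq k)) - u 0‖ ≤ ε/(t+1) := by
      intro s _
      have h1 : ‖K (max s 0) (seq k)‖ ≤ ‖seq k‖ :=
        flow_norm_le hmaps hid hu hure hode (hseqball k) (le_max_right s 0)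
      have h2 : dist (K (max s 0) (seq k)) 0 < δ := by
        rw [dist_zero_right]; exact lt_of_le_of_lt h1 hknorm
      have h3 := hδ (by rwa [dist_zero_right] at h2 ⊢)
      rw [dist_eq_norm] at h3
      exact h3.le
    have hint : (t:ℂ) * u 0 = ∫ s in (0:ℝ)..t, u 0 := by
      rw [intervalIntegral.integral_const, sub_zero, Complex.real_smul]
    have hii1 : IntervalIntegrable (fun s : ℝ => u (K (max s 0) (seq k)))
        MeasureTheory.volume 0 t :=
      (flow_v_cont hmaps hu hode (hseqball k)).intervalIntegrable 0 t
    have hii2 : IntervalIntegrable (fun _ : ℝ => u 0) MeasureTheory.volume 0 t :=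
      intervalIntegrable_const
    rw [dist_eq_norm, hint, ← intervalIntegral.integral_sub hii1 hii2]
    have hb := intervalIntegral.norm_integral_le_of_norm_le_const hbound
    calc ‖∫ s in (0:ℝ)..t, (u (K (max s 0) (seq k)) - u 0)‖
        ≤ ε/(t+1) * |t - 0| := hb
      _ < ε := by
          rw [sub_zero, abs_of_nonneg ht]
          rw [div_mul_eq_mul_div, div_lt_iff₀ (by linarith)]
          nlinarith
  have hlim3 : Tendsto (fun k => slope (K t) 0 (seq k)) atTop
      (nhds (Complex.exp (-((t:ℂ) * u 0)))) := by
    have hcont : Continuous fun w : ℂ => Complex.exp (-w) :=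
      Complex.continuous_exp.comp continuous_neg
    have h4 := (hcont.tendsto ((t:ℂ) * u 0)).comp hlim2
    have h5 : (fun k => slope (K t) 0 (seq k))
        = fun k => Complex.exp (-∫ s in (0:ℝ)..t, u (K (max s 0) (seq k))) :=
      funext hformula
    rw [h5]
    exact h4
  exact tendsto_nhds_unique limit1 hlim3

end Flow

section MaxMod

variable {u : ℂ → ℂ}

lemma re_u_pos (hu : DifferentiableOn ℂ u (ball (0 : ℂ) 1))
    (hure : ∀ z ∈ ball (0 : ℂ) 1, 0 ≤ (u z).re)
    (hc : 0 < (u 0).re) : ∀ y ∈ ball (0:ℂ) 1, 0 < (u y).re := by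
  intro y hy
  rcases lt_or_eq_of_le (hure y hy) with h | h
  · exact h
  · exfalso
    set g : ℂ → ℂ := fun w => Complex.exp (-u w) with hg
    have hgd : DifferentiableOn ℂ g (ball (0:ℂ) 1) := hu.neg.cexp
    have hnorm : ∀ w, ‖g w‖ = Real.exp (-(u w).re) := by
      intro w
      rw [hg]
      simp only [Complex.norm_exp, Complex.neg_re]
    have hmax : IsMaxOn (norm ∘ g) (ball (0:ℂ) 1) y := by
      intro w hw
      simp only [Function.comp_apply, hnorm, Set.mem_setOf_eq]
      rw [Real.exp_le_exp, ← h, neg_zero]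
      exact neg_nonpos.2 (hure w hw)
    have heq := Complex.eqOn_of_isPreconnected_of_isMaxOn_norm
      (convex_ball (0:ℂ) 1).isPreconnected isOpen_ball hgd hy hmax
      (mem_ball_self one_pos)
    have hval : ‖g 0‖ = ‖g y‖ := by rw [heq]; rfl
    rw [hnorm, hnorm, Real.exp_eq_exp, ← h] at hval
    simp only [neg_zero, neg_eq_zero] at hval
    linarith [hval ▸ hc]

lemma u_const_of_re_zero (hu : DifferentiableOn ℂ u (ball (0 : ℂ) 1))
    (hure : ∀ z ∈ ball (0 : ℂ) 1, 0 ≤ (u z).re)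
    (hc : (u 0).re = 0) : ∀ y ∈ ball (0:ℂ) 1, u y = u 0 := by
  set g : ℂ → ℂ := fun w => Complex.exp (-u w) with hg
  have hgd : DifferentiableOn ℂ g (ball (0:ℂ) 1) := hu.neg.cexp
  have hnorm : ∀ w, ‖g w‖ = Real.exp (-(u w).re) := by
    intro w
    rw [hg]
    simp only [Complex.norm_exp, Complex.neg_re]
  have hmax : IsMaxOn (norm ∘ g) (ball (0:ℂ) 1) 0 := by
    intro w hw
    simp only [Function.comp_apply, hnorm, hc, Set.mem_setOf_eq]
    rw [Real.exp_le_exp]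
    simp only [neg_zero, neg_nonpos]
    exact hure w hw
  have heq := Complex.eqOn_of_isPreconnected_of_isMaxOn_norm
    (convex_ball (0:ℂ) 1).isPreconnected isOpen_ball hgd (mem_ball_self one_pos) hmax
  -- g is constant on the ball; hence its derivative vanishes, hence u' = 0 on the ball
  have hderiv0 : ∀ y ∈ ball (0:ℂ) 1, deriv u y = 0 := by
    intro y hy
    have hud : DifferentiableAt ℂ u y := hu.differentiableAt (isOpen_ball.mem_nhds hy)
    have hgy : HasDerivAt g (Complex.exp (-u y) * -(deriv u y)) y :=
      (hud.hasDerivAt.neg).cexp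
    have hgconst : deriv g y = 0 := by
      have hev : g =ᶠ[nhds y] fun _ => g 0 := by
        filter_upwards [isOpen_ball.mem_nhds hy] with w hw
        exact heq hw
      rw [hev.deriv_eq]
      exact deriv_const _ _
    have := hgy.deriv
    rw [hgconst] at this
    have hexp := Complex.exp_ne_zero (-u y)
    field_simp at this
    exact (mul_eq_zero.1 (neg_eq_zero.1 this.symm)).resolve_left hexp
  -- u is constant on the convex ball
  intro y hy
  have hfd : ∀ x ∈ ball (0:ℂ) 1, fderivWithin ℂ u (ball (0:ℂ) 1) x = 0 := by
    intro x hx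
    have hux : DifferentiableAt ℂ u x := hu.differentiableAt (isOpen_ball.mem_nhds hx)
    rw [fderivWithin_eq_fderiv (isOpen_ball.uniqueDiffOn x hx) hux]
    refine ContinuousLinearMap.ext fun w => ?_
    simp only [ContinuousLinearMap.zero_apply]
    have : fderiv ℂ u x w = w • deriv u x := by
      rw [← fderiv_apply_one_eq_deriv]
      rw [show fderiv ℂ u x w = fderiv ℂ u x (w • 1) by rw [smul_eq_mul, mul_one]]
      exact (fderiv ℂ u x).map_smul _ _
    rw [this, hderiv0 x hx, smul_zero]
  exact (convex_ball (0:ℂ) 1).is_const_of_fderivWithin_eq_zero hu hfd hy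
    (mem_ball_self one_pos)

end MaxMod

section Dirac

open Complex

lemma key_ineq {w : ℂ} (habs : ‖w‖ = 1/2) :
    (w/(1-w)).re ≤ 1 ∧ ((w/(1-w)).re = 1 → w = 1/2) := by
  have h1 : Complex.normSq w = 1/4 := by
    rw [Complex.normSq_eq_norm_sq, habs]; norm_num
  rw [Complex.normSq_apply] at h1
  have hD : Complex.normSq (1 - w) = 5/4 - 2*w.re := by
    rw [Complex.normSq_apply]
    simp only [Complex.sub_re, Complex.sub_im, Complex.one_re, Complex.one_im]
    linear_combination h1
  have hale : w.re ≤ 1/2 := by nlinarith [mul_self_nonneg w.im]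
  have hDpos : (0:ℝ) < 5/4 - 2*w.re := by linarith
  have hre_eq : (w/(1-w)).re = (w.re - 1/4)/(5/4 - 2*w.re) := by
    rw [Complex.div_re, hD, ← add_div]
    congr 1
    simp only [Complex.sub_re, Complex.sub_im, Complex.one_re, Complex.one_im]
    linear_combination -h1
  constructor
  · rw [hre_eq, div_le_one hDpos]
    linarith
  · intro heq
    rw [hre_eq, div_eq_one_iff_eq (ne_of_gt hDpos)] at heq
    have ha : w.re = 1/2 := by linarith
    have hb : w.im = 0 := by nlinarith
    apply Complex.ext
    · rw [ha]; norm_num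
    · rw [hb]; norm_num

lemma dirac_of_rotation (μ : Measure Circle) (hμ : IsProbabilityMeasure μ)
    {lam : ℂ} (hlam : ‖lam‖ = 1)
    (h : ∀ z ∈ ball (0:ℂ) 1, Km μ z = lam * z) : ∃ x : Circle, μ = Measure.dirac x := by
  have hlam0 : lam ≠ 0 := by
    intro h0; rw [h0] at hlam; simp at hlam
  have hcc : lam * (starRingEnd ℂ) lam = 1 := by
    rw [Complex.mul_conj]
    rw [Complex.normSq_eq_norm_sq, hlam]
    norm_num
  set z : ℂ := (1/2 : ℂ) * (starRingEnd ℂ) lam with hzdef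
  have hznorm : ‖z‖ = 1/2 := by
    rw [hzdef, norm_mul, Complex.norm_conj, hlam]
    norm_num
  have hzball : z ∈ ball (0:ℂ) 1 := by
    rw [mem_ball_zero_iff, hznorm]; norm_num
  have hKmval : Km μ z = 1/2 := by
    rw [h z hzball, hzdef]
    rw [show lam * ((1/2:ℂ) * (starRingEnd ℂ) lam) = (1/2:ℂ) * (lam * (starRingEnd ℂ) lam) by
      ring, hcc]
    norm_num
  have hψ : psiM μ z = 1 := by
    by_cases hne : 1 + psiM μ z = 0
    · rw [Km, hne, div_zero] at hKmval
      norm_num at hKmval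
    · rw [Km] at hKmval
      field_simp at hKmval
      linear_combination hKmval
  set f : Circle → ℂ := fun x => (z * (x:ℂ)) / (1 - z * (x:ℂ)) with hfdef
  have habsw : ∀ x : Circle, ‖z * (x:ℂ)‖ = 1/2 := by
    intro x; rw [norm_mul, hznorm, Circle.norm_coe, mul_one]
  have hden : ∀ x : Circle, (1 : ℂ) - z * (x:ℂ) ≠ 0 := by
    intro x hx0
    have h1 : (1:ℂ) = z * x := by linear_combination hx0
    have h2 := congrArg norm h1
    rw [habsw] at h2
    simp at h2
  have hcoe : Continuous fun x : Circle => (x : ℂ) := continuous_subtype_val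
  have hfcont : Continuous f := by
    apply Continuous.div
    · exact continuous_const.mul hcoe
    · exact continuous_const.sub (continuous_const.mul hcoe)
    · exact hden
  have hdennorm : ∀ x : Circle, (1:ℝ)/2 ≤ ‖(1:ℂ) - z * (x:ℂ)‖ := by
    intro x
    have h1 := norm_sub_norm_le (1 : ℂ) (z * (x:ℂ))
    rw [norm_one] at h1
    have h2 : ‖z * (x:ℂ)‖ = 1/2 := by rw [habsw]
    rw [h2] at h1
    linarith
  have hfbound : ∀ x : Circle, ‖f x‖ ≤ 1 := by
    intro x
    rw [hfdef]
    simp only []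
    rw [norm_div]
    have h2 : ‖z * (x:ℂ)‖ = 1/2 := by rw [habsw]
    rw [h2, div_le_one (lt_of_lt_of_le (by norm_num) (hdennorm x))]
    exact (hdennorm x)
  have hfint : Integrable f μ :=
    Integrable.mono' (integrable_const (1:ℝ)) (hfcont.aestronglyMeasurable)
      (Filter.Eventually.of_forall hfbound)
  have hfsum : ∫ x, f x ∂μ = 1 := by
    rw [← hψ]; rfl
  have hint_re : ∫ x, (f x).re ∂μ = 1 := by
    have h1 := integral_re hfint
    rw [hfsum] at h1
    simpa using h1
  have hfre : Integrable (fun x : Circle => (f x).re) μ := by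
    have h1 := hfint.re
    simpa using h1
  set G : Circle → ℝ := fun x => 1 - (f x).re with hGdef
  have hGint : Integrable G μ := (integrable_const 1).sub hfre
  have hG0 : 0 ≤ G := by
    intro x
    have h1 := (key_ineq (habsw x)).1
    simp only [hGdef, Pi.zero_apply]
    linarith [h1]
  have hGzero : ∫ x, G x ∂μ = 0 := by
    have h1 : ∫ x, G x ∂μ = (∫ _ : Circle, (1:ℝ) ∂μ) - ∫ x, (f x).re ∂μ := by
      simp only [hGdef]
      exact integral_sub (integrable_const 1) hfre
    rw [h1, hint_re]
    simp
  have hae0 : G =ᵐ[μ] 0 := (integral_eq_zero_iff_of_nonneg hG0 hGint).1 hGzero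
  set xl : Circle := Circle.exp (Complex.arg lam) with hxldef
  have hxl : (xl : ℂ) = lam := by
    rw [hxldef, Circle.coe_exp]
    have h1 := Complex.norm_mul_exp_arg_mul_I lam
    rw [hlam, Complex.ofReal_one, one_mul] at h1
    exact h1
  have hae : ∀ᵐ x ∂μ, x = xl := by
    filter_upwards [hae0] with x hx
    have hGx : G x = 0 := hx
    have h1 : (f x).re = 1 := by
      simp only [hGdef] at hGx
      linarith [hGx]
    have h2 := (key_ineq (habsw x)).2 h1
    have h3 : (starRingEnd ℂ) lam * (x:ℂ) = 1 := by
      have h4 : z * (x:ℂ) = 1/2 := h2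
      rw [hzdef] at h4
      linear_combination 2 * h4
    have h5 : (x : ℂ) = lam := by linear_combination lam * h3 - (x:ℂ) * hcc
    exact Circle.ext (by rw [h5, hxl])
  refine ⟨xl, ?_⟩
  have hnull : μ {x : Circle | ¬ x = xl} = 0 := ae_iff.1 hae
  apply Measure.ext
  intro s hs
  rw [Measure.dirac_apply' xl hs]
  by_cases hx : xl ∈ s
  · rw [Set.indicator_of_mem hx]
    simp only [Pi.one_apply]
    have hsub : sᶜ ⊆ {x : Circle | ¬ x = xl} := fun x hxc heq => hxc (by rw [heq]; exact hx)
    have h1 : μ sᶜ = 0 := measure_mono_null hsub hnull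
    have h2 := measure_add_measure_compl (μ := μ) hs
    rw [h1, add_zero, measure_univ] at h2
    exact h2
  · rw [Set.indicator_of_notMem hx]
    refine measure_mono_null (fun x hxs => ?_) hnull
    intro heq
    exact hx (heq ▸ hxs)

end Dirac



/-- If a probability measure `μ` on the unit circle that is not concentrated in one
point embeds into a continuous monotone convolution semigroup (i.e. `K_μ = K_{t₀}`
for a continuous composition semigroup of K-transforms `(K_t)` with generator `u`),
then `K_μ' ≠ 0` on `𝔻`, the iterates satisfy
`-K_μ^{∘n}(z)/(K_μ^{∘n})'(z) → -z·u(z)/u(0)` locally uniformly on `𝔻`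
(a limit of the form `α z u(z)` with `α = -1/u(0) ≠ 0`), and
`K_μ'(0) = e^{-t₀ u(0)}`. -/
theorem embeddable_implies_iterate_limit
    (μ : Measure Circle) (hμ : IsProbabilityMeasure μ)
    (hnotpoint : ¬ ∃ x : Circle, μ = Measure.dirac x)
    (K : ℝ → ℂ → ℂ)
    (hdiff : ∀ t ≥ (0 : ℝ), DifferentiableOn ℂ (K t) (ball (0 : ℂ) 1))
    (hmaps : ∀ t ≥ (0 : ℝ), MapsTo (K t) (ball (0 : ℂ) 1) (ball (0 : ℂ) 1))
    (hzero : ∀ t ≥ (0 : ℝ), K t 0 = 0)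
    (hid : ∀ z ∈ ball (0 : ℂ) 1, K 0 z = z)
    (hsg : ∀ s ≥ (0 : ℝ), ∀ t ≥ (0 : ℝ), ∀ z ∈ ball (0 : ℂ) 1, K (s + t) z = K s (K t z))
    (hcont : ∀ t₀ ≥ (0 : ℝ),
      TendstoLocallyUniformlyOn K (K t₀) (nhdsWithin t₀ (Ici 0)) (ball (0 : ℂ) 1))
    (u : ℂ → ℂ)
    (hu : DifferentiableOn ℂ u (ball (0 : ℂ) 1))
    (hure : ∀ z ∈ ball (0 : ℂ) 1, 0 ≤ (u z).re)
    (hode : ∀ z ∈ ball (0 : ℂ) 1, ∀ t ≥ (0 : ℝ),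
      HasDerivWithinAt (fun s => K s z) (-(K t z) * u (K t z)) (Ici 0) t)
    (t₀ : ℝ) (ht₀ : 0 ≤ t₀)
    (hembed : ∀ z ∈ ball (0 : ℂ) 1, Km μ z = K t₀ z) :
    u 0 ≠ 0 ∧
    (∀ z ∈ ball (0 : ℂ) 1, deriv (Km μ) z ≠ 0) ∧
    TendstoLocallyUniformlyOn
      (fun (n : ℕ) (z : ℂ) => -((Km μ)^[n] z) / deriv ((Km μ)^[n]) z)
      (fun z => -z * u z / u 0) atTop (ball (0 : ℂ) 1) ∧
    deriv (Km μ) 0 = Complex.exp (-(t₀ : ℂ) * u 0) := by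
  have h0B : (0:ℂ) ∈ ball (0:ℂ) 1 := mem_ball_self one_pos
  have hrot : ∀ lam : ℂ, ‖lam‖ = 1 →
      (∀ z ∈ ball (0:ℂ) 1, K t₀ z = lam * z) → False := by
    intro lam hl hKrot
    exact hnotpoint (dirac_of_rotation μ hμ hl (fun z hz => by rw [hembed z hz, hKrot z hz]))
  have hcre : 0 < (u 0).re := by
    rcases lt_or_eq_of_le (hure 0 h0B) with h | h
    · exact h
    · exfalso
      have huc := u_const_of_re_zero hu hure h.symm
      have hKrot : ∀ z ∈ ball (0:ℂ) 1, K t₀ z = Complex.exp (-((t₀:ℂ) * u 0)) * z := by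
        intro z hz
        rw [flow_formula hmaps hid hu hode hz ht₀]
        have hintc : (∫ s in (0:ℝ)..t₀, u (K (max s 0) z)) = ∫ s in (0:ℝ)..t₀, u 0 := by
          apply intervalIntegral.integral_congr
          intro s _
          exact huc _ (hmaps _ (le_max_right s 0) hz)
        rw [hintc, intervalIntegral.integral_const, sub_zero, Complex.real_smul]
        ring
      apply hrot _ _ hKrot
      rw [Complex.norm_exp]
      have hre0 : (-((t₀:ℂ) * u 0)).re = 0 := by
        simp [Complex.mul_re, ← h]
      rw [hre0, Real.exp_zero]
  have hu0 : u 0 ≠ 0 := fun hh => by rw [hh] at hcre; simp at hcre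
  have hupos := re_u_pos hu hure hcre
  have hune : ∀ y ∈ ball (0:ℂ) 1, u y ≠ 0 := by
    intro y hy hy0
    have := hupos y hy
    rw [hy0] at this
    simp at this
  have ht₀pos : 0 < t₀ := by
    rcases lt_or_eq_of_le ht₀ with h | h
    · exact h
    · exfalso
      apply hrot 1 (by simp)
      intro z hz
      rw [← h, hid z hz, one_mul]
  have hKm0 : ∀ z ∈ ball (0:ℂ) 1, deriv (Km μ) z = deriv (K t₀) z := by
    intro z hz
    apply Filter.EventuallyEq.deriv_eq
    filter_upwards [isOpen_ball.mem_nhds hz] with w hw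
    exact hembed w hw
  have hKt0deriv : deriv (K t₀) 0 = Complex.exp (-((t₀:ℂ) * u 0)) :=
    deriv_K_zero hdiff hmaps hzero hid hu hure hode ht₀
  have h4 : deriv (Km μ) 0 = Complex.exp (-(t₀ : ℂ) * u 0) := by
    rw [hKm0 0 h0B, hKt0deriv, neg_mul]
  have h2 : ∀ z ∈ ball (0:ℂ) 1, deriv (Km μ) z ≠ 0 := by
    intro z hz
    rw [hKm0 z hz]
    by_cases hz0 : z = 0
    · subst hz0
      rw [hKt0deriv]
      exact Complex.exp_ne_zero _
    · have hident := deriv_identity hdiff hid hsg hode ht₀ hz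
      intro hd0
      rw [hd0, zero_mul] at hident
      have hb0 : K t₀ z ≠ 0 := flow_ne_zero hmaps hid hu hode hz hz0 ht₀
      have hub0 : u (K t₀ z) ≠ 0 := hune _ (hmaps t₀ ht₀ hz)
      exact (mul_ne_zero hb0 hub0) hident
  have hiter : ∀ n : ℕ, ∀ z ∈ ball (0:ℂ) 1, (Km μ)^[n] z = K ((n:ℝ) * t₀) z := by
    intro n
    induction n with
    | zero =>
      intro z hz
      simp only [Function.iterate_zero, id_eq, Nat.cast_zero, zero_mul]
      exact (hid z hz).symm
    | succ n ih =>
      intro z hz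
      have hnt : (0:ℝ) ≤ (n:ℝ) * t₀ := by positivity
      rw [Function.iterate_succ_apply', ih z hz]
      have hb : K ((n:ℝ)*t₀) z ∈ ball (0:ℂ) 1 := hmaps _ hnt hz
      rw [hembed _ hb, ← hsg t₀ ht₀ ((n:ℝ)*t₀) hnt z hz]
      congr 1
      push_cast
      ring
  refine ⟨hu0, h2, ?_, h4⟩
  rw [tendstoLocallyUniformlyOn_iff_forall_isCompact isOpen_ball]
  intro S hS hScomp
  rcases S.eq_empty_or_nonempty with hSe | hSne
  · rw [hSe]; exact tendstoUniformlyOn_empty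
  obtain ⟨w0, hw0S, hw0max⟩ := hScomp.exists_isMaxOn hSne continuous_norm.continuousOn
  set r := ‖w0‖ with hrdef
  have hr1 : r < 1 := mem_ball_zero_iff.1 (hS hw0S)
  have hr0 : 0 ≤ r := norm_nonneg _
  have hSr : ∀ z ∈ S, ‖z‖ ≤ r := fun z hz => hw0max hz
  have hball_sub : closedBall (0:ℂ) r ⊆ ball (0:ℂ) 1 := closedBall_subset_ball hr1
  obtain ⟨y0, hy0mem, hy0min⟩ := (isCompact_closedBall (0:ℂ) r).exists_isMinOn
      ⟨0, mem_closedBall_self hr0⟩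
      (Complex.continuous_re.comp_continuousOn (hu.continuousOn.mono hball_sub))
  set δ := (u y0).re with hδdef
  have hδpos : 0 < δ := hupos y0 (hball_sub hy0mem)
  have hδ : ∀ y ∈ closedBall (0:ℂ) r, δ ≤ (u y).re := fun y hy => hy0min hy
  obtain ⟨Mu, hMu⟩ := hScomp.exists_bound_of_continuousOn
      (continuousOn_id.mul (hu.continuousOn.mono hS))
  have hMu0 : 0 ≤ Mu := by
    obtain ⟨x0, hx0⟩ := hSne
    exact (norm_nonneg _).trans (hMu x0 hx0)
  rw [Metric.tendstoUniformlyOn_iff]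
  intro ε hε
  have hcpos : 0 < ‖u 0‖ := norm_pos_iff.2 hu0
  set ε₂ := min (‖u 0‖/2) (ε * ‖u 0‖^2/(4*(Mu+1))) with hε₂def
  have hε₂pos : 0 < ε₂ := lt_min (by positivity) (by positivity)
  have hucont : ContinuousAt u 0 := (hu.differentiableAt (isOpen_ball.mem_nhds h0B)).continuousAt
  obtain ⟨ρ, hρpos, hρ⟩ := Metric.continuousAt_iff.1 hucont ε₂ hε₂pos
  have hdecay_tendsto : Tendsto (fun n : ℕ => r * Real.exp (-(δ * ((n:ℝ) * t₀)))) atTop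
      (nhds 0) := by
    have h1 : Tendsto (fun n : ℕ => -(δ * ((n:ℝ) * t₀))) atTop atBot := by
      apply Filter.tendsto_neg_atBot_iff.2
      have h2 : Tendsto (fun n : ℕ => (n:ℝ)) atTop atTop := tendsto_natCast_atTop_atTop
      have h3 : Tendsto (fun n : ℕ => (n:ℝ) * t₀) atTop atTop :=
        Tendsto.atTop_mul_const ht₀pos h2
      exact Tendsto.const_mul_atTop hδpos h3
    have h4 := Real.tendsto_exp_atBot.comp h1
    have h5 := h4.const_mul r
    simpa using h5
  have hev := hdecay_tendsto.eventually_lt_const hρpos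
  filter_upwards [hev] with n hn z hzS
  have hz : z ∈ ball (0:ℂ) 1 := hS hzS
  have hnt : (0:ℝ) ≤ (n:ℝ)*t₀ := by positivity
  set b := K ((n:ℝ)*t₀) z with hbdef
  have hbball : b ∈ ball (0:ℂ) 1 := hmaps _ hnt hz
  have hbnorm : ‖b‖ ≤ r * Real.exp (-(δ * ((n:ℝ)*t₀))) :=
    flow_decay hmaps hid hu hure hode hδ hz (hSr z hzS) hnt
  have hbρ : dist b 0 < ρ := by
    rw [dist_zero_right]; exact lt_of_le_of_lt hbnorm hn
  have hub : ‖u b - u 0‖ < ε₂ := by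
    have := hρ hbρ
    rwa [dist_eq_norm] at this
  have hubnorm : ‖u 0‖/2 ≤ ‖u b‖ := by
    have h1 : ‖u 0‖ - ‖u b‖ ≤ ‖u 0 - u b‖ := norm_sub_norm_le _ _
    rw [norm_sub_rev] at h1
    have h2 : ‖u b - u 0‖ ≤ ‖u 0‖/2 := hub.le.trans (min_le_left _ _)
    linarith
  have hub0 : u b ≠ 0 := by
    intro h0
    rw [h0, norm_zero] at hubnorm
    linarith
  have hFval : -((Km μ)^[n] z) / deriv ((Km μ)^[n]) z = -(z * u z) / u b := by
    by_cases hz0 : z = 0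
    · subst hz0
      rw [hiter n 0 h0B, ← hbdef]
      have hb00 : b = 0 := hzero _ hnt
      rw [hb00]
      simp
    · have hKn := hiter n z hz
      have hdn : deriv ((Km μ)^[n]) z = deriv (K ((n:ℝ)*t₀)) z := by
        apply Filter.EventuallyEq.deriv_eq
        filter_upwards [isOpen_ball.mem_nhds hz] with w hw
        exact hiter n w hw
      have hident := deriv_identity hdiff hid hsg hode hnt hz
      have hbne : b ≠ 0 := flow_ne_zero hmaps hid hu hode hz hz0 hnt
      have hzu : z * u z ≠ 0 := mul_ne_zero hz0 (hune z hz)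
      rw [hKn, hdn, ← hbdef]
      rw [← hbdef] at hident
      have hder_eq : deriv (K ((n:ℝ)*t₀)) z = b * u b / (z * u z) := by
        rw [eq_div_iff hzu]
        linear_combination -hident
      rw [hder_eq]
      field_simp
  rw [dist_eq_norm, hFval]
  have hdiff_eq : -z * u z / u 0 - -(z * u z) / u b
      = (z * u z) * (u 0 - u b) / (u b * u 0) := by
    field_simp
    ring
  rw [hdiff_eq]
  have hnorm_eq : ‖(z * u z) * (u 0 - u b) / (u b * u 0)‖
      = ‖z * u z‖ * ‖u 0 - u b‖ / (‖u b‖ * ‖u 0‖) := by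
    simp only [norm_div, norm_mul]
  rw [hnorm_eq]
  have hMu' : ‖z * u z‖ ≤ Mu := by simpa using hMu z hzS
  have hd1 : (0:ℝ) < (‖u 0‖/2) * ‖u 0‖ := by positivity
  have hstep1 : ‖z * u z‖ * ‖u 0 - u b‖ / (‖u b‖ * ‖u 0‖)
      ≤ Mu * ε₂ / ((‖u 0‖/2) * ‖u 0‖) := by
    apply div_le_div₀ (by positivity) ?_ hd1 ?_
    · exact mul_le_mul hMu' (by rw [norm_sub_rev]; exact hub.le) (norm_nonneg _) hMu0
    · exact mul_le_mul_of_nonneg_right hubnorm (norm_nonneg _)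
  have hstep2 : Mu * ε₂ / ((‖u 0‖/2) * ‖u 0‖) < ε := by
    rw [div_lt_iff₀ hd1]
    have h1 : ε₂ ≤ ε * ‖u 0‖^2/(4*(Mu+1)) := min_le_right _ _
    have h5 : Mu * ε₂ ≤ Mu * (ε * ‖u 0‖^2/(4*(Mu+1))) := mul_le_mul_of_nonneg_left h1 hMu0
    have h6 : Mu * (ε * ‖u 0‖^2/(4*(Mu+1))) < ε * ((‖u 0‖/2) * ‖u 0‖) := by
      rw [← mul_div_assoc, div_lt_iff₀ (by positivity : (0:ℝ) < 4*(Mu+1))]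
      have hc2 : 0 < ‖u 0‖ * ‖u 0‖ := mul_pos hcpos hcpos
      rw [pow_two]
      nlinarith [mul_pos hε hc2, mul_nonneg (mul_pos hε hc2).le hMu0]
    linarith
  exact lt_of_le_of_lt hstep1 hstep2
end
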